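/- arXiv:math/0207310 — 7 statements merged into one kernel-verified Lean document; each statement's English description precedes it below -/
import Mathlib

section
/- Let 𝔽 be a finite field of characteristic p with |𝔽| > 2, let r ≥ 1, and let W = 𝔽^r be the natural r-dimensional representation of GL_r(𝔽) over 𝔽 (the action by matrix-vector multiplication). Then H¹(GL_r(𝔽), W) = 0. -/
open groupCohomology

universe u

/-- The natural representation of `GL n 𝔽` on `Fin n → 𝔽` by matrix-vector multiplication. -/
noncomputable def glRep (𝔽 : Type u) [Field 𝔽] (n : ℕ) :
    Representation 𝔽 (GL (Fin n) 𝔽) (Fin n → 𝔽) :=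
  (Units.coeHom ((Fin n → 𝔽) →ₗ[𝔽] (Fin n → 𝔽))).comp
    (Matrix.GeneralLinearGroup.toLin (n := Fin n) (R := 𝔽)).toMonoidHom

lemma glRep_apply {𝔽 : Type u} [Field 𝔽] {n : ℕ} (g : GL (Fin n) 𝔽) (v : Fin n → 𝔽) :
    glRep 𝔽 n g v = Matrix.mulVec (g : Matrix (Fin n) (Fin n) 𝔽) v := by
  rfl

/-- If `𝔽` is a finite field of characteristic `p` with more than two
elements and `W = 𝔽^r` (`r ≥ 1`) is the natural representation of `GL_r(𝔽)`, then
`H¹(GL_r(𝔽), W) = 0`. -/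
theorem h1_GL_natural_rep_eq_zero (p : ℕ) [Fact p.Prime] (𝔽 : Type u) [Field 𝔽] [Fintype 𝔽]
    [CharP 𝔽 p] (hcard : 2 < Fintype.card 𝔽) (r : ℕ) (hr : 1 ≤ r) :
    Subsingleton (groupCohomology.H1 (Rep.of (glRep 𝔽 r))) := by
  classical
  -- pick λ ≠ 0, 1
  obtain ⟨l, hl⟩ : ∃ l : 𝔽, l ∉ ({0, 1} : Finset 𝔽) := by
    by_contra h
    push_neg at h
    have := Finset.card_le_card (fun x _ => h x : (Finset.univ : Finset 𝔽) ⊆ {0, 1})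
    rw [Finset.card_univ] at this
    have h2 : ({0, 1} : Finset 𝔽).card ≤ 2 := Finset.card_insert_le _ _ |>.trans (by simp)
    omega
  simp only [Finset.mem_insert, Finset.mem_singleton, not_or] at hl
  obtain ⟨hl0, hl1⟩ := hl
  -- the central scalar element
  set c : GL (Fin r) 𝔽 :=
    Units.map (Matrix.scalar (Fin r)).toMonoidHom (Units.mk0 l hl0) with hc
  have hcomm : ∀ g : GL (Fin r) 𝔽, c * g = g * c := by
    intro g
    ext1
    exact (Matrix.scalar_commute l (fun r' => mul_comm l r') (g : Matrix (Fin r) (Fin r) 𝔽))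
  have hcact : ∀ v : Fin r → 𝔽, glRep 𝔽 r c v = l • v := by
    intro v
    rw [glRep_apply]
    show Matrix.mulVec (Matrix.scalar (Fin r) l) v = l • v
    funext i
    simp [Matrix.scalar_apply, Matrix.mulVec_diagonal]
  suffices hall : ∀ x : groupCohomology.H1 (Rep.of (glRep 𝔽 r)), x = 0 from
    ⟨fun a b => (hall a).trans (hall b).symm⟩
  intro x
  induction x using H1_induction_on with | h f => ?_
  rw [H1π_eq_zero_iff]
  have A : Rep 𝔽 (GL (Fin r) 𝔽) := Rep.of (glRep 𝔽 r)
  have hf := (mem_cocycles₁_iff (A := Rep.of (glRep 𝔽 r)) (f : GL (Fin r) 𝔽 → (Fin r → 𝔽))).1 f.2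
  refine ⟨(l - 1)⁻¹ • (f : GL (Fin r) 𝔽 → Fin r → 𝔽) c, funext fun g => ?_⟩
  rw [d₀₁_hom_apply]
  have h1 : (f : GL (Fin r) 𝔽 → Fin r → 𝔽) (c * g)
      = l • (f : GL (Fin r) 𝔽 → Fin r → 𝔽) g + (f : GL (Fin r) 𝔽 → Fin r → 𝔽) c := by
    rw [hf c g, ← hcact]
  have h2 : (f : GL (Fin r) 𝔽 → Fin r → 𝔽) (g * c)
      = (Rep.of (glRep 𝔽 r)).ρ g ((f : GL (Fin r) 𝔽 → Fin r → 𝔽) c) + (f : GL (Fin r) 𝔽 → Fin r → 𝔽) g := hf g c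
  rw [hcomm g, h2] at h1
  have hsub : (l - 1) ≠ 0 := sub_ne_zero.2 hl1
  have key : (l - 1) • (f : GL (Fin r) 𝔽 → Fin r → 𝔽) g
      = (Rep.of (glRep 𝔽 r)).ρ g ((f : GL (Fin r) 𝔽 → Fin r → 𝔽) c) - (f : GL (Fin r) 𝔽 → Fin r → 𝔽) c := by
    rw [sub_smul, one_smul]
    linear_combination (norm := module) -h1
  have : (f : GL (Fin r) 𝔽 → Fin r → 𝔽) g
      = (l - 1)⁻¹ • ((Rep.of (glRep 𝔽 r)).ρ g ((f : GL (Fin r) 𝔽 → Fin r → 𝔽) c)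
        - (f : GL (Fin r) 𝔽 → Fin r → 𝔽) c) := by
    rw [← key, ← smul_assoc, smul_eq_mul, inv_mul_cancel₀ hsub, one_smul]
  rw [this, smul_sub, map_smul]
end

section
/- Let 𝔽 be a finite field of characteristic p with p ≠ 2, let r ≥ 1, and let W = 𝔽^r be the natural r-dimensional representation of SL_r(𝔽) over 𝔽 (the action by matrix-vector multiplication). Then H¹(SL_r(𝔽), W) = 0. -/
open groupCohomology Matrix

universe u

/-- The natural representation of `SL n 𝔽` on `Fin n → 𝔽` by matrix-vector multiplication. -/
noncomputable def slRep (𝔽 : Type u) [Field 𝔽] (n : ℕ) :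
    Representation 𝔽 (Matrix.SpecialLinearGroup (Fin n) 𝔽) (Fin n → 𝔽) :=
  MonoidHom.comp (glRep 𝔽 n) Matrix.SpecialLinearGroup.toGL

namespace SLH1Aux

variable {𝔽 : Type u} [Field 𝔽] {r : ℕ}

theorem tv_mulVec (i j : Fin r) (c : 𝔽) (v : Fin r → 𝔽) (k : Fin r) :
    (Matrix.transvection i j c *ᵥ v) k = v k + if k = i then c * v j else 0 := by
  simp [Matrix.transvection, Matrix.add_mulVec, Matrix.mulVec, dotProduct, Matrix.single_apply, ite_and,
    Function.update_apply, add_comm, add_mul, Finset.sum_add_distrib, Matrix.one_apply, ite_mul, @eq_comm _ i k]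

theorem diag_tv_comm (d : Fin r → 𝔽) (i j : Fin r) (c : 𝔽) (h : d i = d j) :
    Matrix.diagonal d * Matrix.transvection i j c
      = Matrix.transvection i j c * Matrix.diagonal d := by
  ext a b
  simp only [Matrix.transvection, Matrix.mul_add, Matrix.add_mul, Matrix.mul_one,
    Matrix.one_mul, Matrix.add_apply, Matrix.diagonal_mul, Matrix.mul_diagonal,
    Matrix.single_apply, Matrix.of_apply]
  split_ifs with h1
  · obtain ⟨rfl, rfl⟩ := h1
    rw [h, mul_comm]
  · rcases eq_or_ne a b with rfl | hab
    · rw [mul_comm]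
    · simp [Matrix.one_apply_ne hab]

theorem tv_identity (i j l : Fin r) (hjl : j ≠ l) (hil : i ≠ l) (c : 𝔽) :
    Matrix.transvection i j c * Matrix.transvection j l 1
      = Matrix.transvection i l c * (Matrix.transvection j l 1 * Matrix.transvection i j c) := by
  simp only [Matrix.transvection, Matrix.mul_add, Matrix.add_mul, Matrix.mul_one, Matrix.one_mul,
    Matrix.single_mul_single_same,
    Matrix.single_mul_single_of_ne, hjl.symm, hil.symm, Ne, not_false_eq_true,
    mul_one, one_mul, add_zero]
  abel

def sgnd (i j : Fin r) : Fin r → 𝔽 := fun k => if k = i ∨ k = j then -1 else 1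

theorem sgnd_prod (i j : Fin r) (hij : i ≠ j) : ∏ k, sgnd (𝔽 := 𝔽) i j k = 1 := by
  have h : ∀ k, sgnd (𝔽 := 𝔽) i j k
      = (if k = i then (-1:𝔽) else 1) * (if k = j then (-1:𝔽) else 1) := by
    intro k
    by_cases h1 : k = i
    · subst h1; simp [sgnd, hij]
    · by_cases h2 : k = j <;> simp [sgnd, h1, h2, hij.symm]
  rw [Finset.prod_congr rfl fun k _ => h k, Finset.prod_mul_distrib,
    Finset.prod_ite_eq' Finset.univ i fun _ => (-1:𝔽),
    Finset.prod_ite_eq' Finset.univ j fun _ => (-1:𝔽)]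
  simp

def sgn (i j : Fin r) (hij : i ≠ j) : Matrix.SpecialLinearGroup (Fin r) 𝔽 :=
  ⟨Matrix.diagonal (sgnd i j), by simp [Matrix.det_diagonal, sgnd_prod i j hij]⟩

def tv (i j : Fin r) (hij : i ≠ j) (c : 𝔽) : Matrix.SpecialLinearGroup (Fin r) 𝔽 :=
  ⟨Matrix.transvection i j c, Matrix.det_transvection_of_ne i j hij c⟩

theorem tv_sgn_comm (i j : Fin r) (hij : i ≠ j) (c : 𝔽) :
    tv i j hij c * sgn i j hij = sgn i j hij * tv i j hij c := by
  apply Subtype.ext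
  show Matrix.transvection i j c * Matrix.diagonal _ = Matrix.diagonal _ * Matrix.transvection i j c
  exact (diag_tv_comm (sgnd i j) i j c (by simp [sgnd])).symm

section core
variable (htwo : (2:𝔽) ≠ 0)
variable (f : Matrix.SpecialLinearGroup (Fin r) 𝔽 → (Fin r → 𝔽))
variable (C : ∀ g h : Matrix.SpecialLinearGroup (Fin r) 𝔽, f (g * h) = g.val *ᵥ f h + f g)
variable (hdiag : ∀ (g : Matrix.SpecialLinearGroup (Fin r) 𝔽) (d : Fin r → 𝔽),
    g.val = Matrix.diagonal d → f g = 0)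

include C

theorem f_one : f 1 = 0 := by
  have := C 1 1
  simp only [mul_one, Matrix.SpecialLinearGroup.coe_one, Matrix.one_mulVec] at this
  exact add_eq_left.mp this.symm

theorem f_fix {g h : Matrix.SpecialLinearGroup (Fin r) 𝔽} (hc : g * h = h * g)
    (hh : f h = 0) : h.val *ᵥ f g = f g := by
  have h1 := C h g
  have h2 := C g h
  rw [hc] at h2
  rw [h1, hh, Matrix.mulVec_zero, zero_add] at h2
  simpa using h2

include htwo hdiag

theorem f_tv_same {i j : Fin r} (hij : i ≠ j) (c : 𝔽) (k : Fin r) (hk : k = i ∨ k = j) :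
    f (tv i j hij c) k = 0 := by
  have h1 := f_fix f C (tv_sgn_comm i j hij c) (hdiag _ _ rfl)
  have h2 := congrFun h1 k
  rw [show (sgn i j hij).val = Matrix.diagonal (sgnd i j) from rfl,
    Matrix.mulVec_diagonal] at h2
  rw [show sgnd (𝔽 := 𝔽) i j k = -1 from if_pos hk] at h2
  have h3 : (2:𝔽) * f (tv i j hij c) k = 0 := by linear_combination -h2
  exact (mul_eq_zero.mp h3).resolve_left htwo

theorem f_tv_other {i j : Fin r} (hij : i ≠ j) (c : 𝔽) (l : Fin r)
    (hli : l ≠ i) (hlj : l ≠ j) : f (tv i j hij c) l = 0 := by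
  rcases eq_or_ne c 0 with rfl | hc
  · have h1 : tv i j hij (0:𝔽) = 1 := Subtype.ext (by simp [tv])
    rw [h1, f_one f C]
    rfl
  · set x := tv i j hij c with hx
    set y := tv j l hlj.symm (1:𝔽) with hy
    set z := tv i l hli.symm c with hz
    have key : x * y = z * (y * x) := by
      apply Subtype.ext
      simp only [Matrix.SpecialLinearGroup.coe_mul]
      exact tv_identity i j l hlj.symm hli.symm c
    have main : x.val *ᵥ f y + f x = z.val *ᵥ (y.val *ᵥ f x + f y) + f z := by
      rw [← C x y, key, C z (y * x), C y x]
    have fyj : f y j = 0 := f_tv_same htwo f C hdiag _ _ j (Or.inl rfl)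
    have fyl : f y l = 0 := f_tv_same htwo f C hdiag _ _ l (Or.inr rfl)
    have fxi : f x i = 0 := f_tv_same htwo f C hdiag _ _ i (Or.inl rfl)
    have fzi : f z i = 0 := f_tv_same htwo f C hdiag _ _ i (Or.inl rfl)
    have e := congrFun main i
    rw [Matrix.mulVec_add] at e
    simp only [Pi.add_apply] at e
    rw [show x.val = Matrix.transvection i j c from rfl,
      show y.val = Matrix.transvection j l 1 from rfl,
      show z.val = Matrix.transvection i l c from rfl] at e
    simp only [tv_mulVec] at e
    simp only [if_pos rfl, if_neg hij, if_neg hlj, fyj, fyl, fxi, fzi, mul_zero, mul_one,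
      add_zero, zero_add, if_true, ite_self] at e
    have hcl : c * f x l = 0 := by first | linear_combination e | linear_combination -e
    exact (mul_eq_zero.mp hcl).resolve_left hc

theorem f_tv_zero {i j : Fin r} (hij : i ≠ j) (c : 𝔽) : f (tv i j hij c) = 0 := by
  funext k
  by_cases h1 : k = i
  · exact f_tv_same htwo f C hdiag hij c k (Or.inl h1)
  · by_cases h2 : k = j
    · exact f_tv_same htwo f C hdiag hij c k (Or.inr h2)
    · exact f_tv_other htwo f C hdiag hij c k h1 h2

theorem f_tv_list (L : List (Matrix.TransvectionStruct (Fin r) 𝔽))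
    (h : ((L.map Matrix.TransvectionStruct.toMatrix).prod).det = 1) :
    f ⟨(L.map Matrix.TransvectionStruct.toMatrix).prod, h⟩ = 0 := by
  induction L with
  | nil =>
      have : (⟨(List.map Matrix.TransvectionStruct.toMatrix []).prod, h⟩ :
          Matrix.SpecialLinearGroup (Fin r) 𝔽) = (1 : Matrix.SpecialLinearGroup (Fin r) 𝔽) :=
        Subtype.ext (by simp)
      rw [this, f_one f C]
  | cons t L ih =>
      have hdet : ((L.map Matrix.TransvectionStruct.toMatrix).prod).det = 1 :=
        Matrix.TransvectionStruct.det_toMatrix_prod L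
      have heq : (⟨(List.map Matrix.TransvectionStruct.toMatrix (t :: L)).prod, h⟩ :
          Matrix.SpecialLinearGroup (Fin r) 𝔽)
          = HMul.hMul (α := Matrix.SpecialLinearGroup (Fin r) 𝔽) (β := Matrix.SpecialLinearGroup (Fin r) 𝔽) (γ := Matrix.SpecialLinearGroup (Fin r) 𝔽) (tv t.i t.j t.hij t.c) ⟨(L.map Matrix.TransvectionStruct.toMatrix).prod, hdet⟩ :=
        Subtype.ext rfl
      rw [heq, C (tv t.i t.j t.hij t.c) ⟨_, hdet⟩, ih hdet, f_tv_zero htwo f C hdiag, Matrix.mulVec_zero, add_zero]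

theorem f_vanish (g : Matrix.SpecialLinearGroup (Fin r) 𝔽) : f g = 0 := by
  obtain ⟨L, L', D, hM⟩ := Matrix.Pivot.exists_list_transvec_mul_diagonal_mul_list_transvec g.val
  have hL : ((L.map Matrix.TransvectionStruct.toMatrix).prod).det = 1 :=
    Matrix.TransvectionStruct.det_toMatrix_prod L
  have hL' : ((L'.map Matrix.TransvectionStruct.toMatrix).prod).det = 1 :=
    Matrix.TransvectionStruct.det_toMatrix_prod L'
  have hD : (Matrix.diagonal D).det = 1 := by
    have := g.2
    rw [hM] at this
    simpa [Matrix.det_mul, hL, hL'] using this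
  have heq : g = HMul.hMul (α := Matrix.SpecialLinearGroup (Fin r) 𝔽) (β := Matrix.SpecialLinearGroup (Fin r) 𝔽) (γ := Matrix.SpecialLinearGroup (Fin r) 𝔽) ⟨(L.map Matrix.TransvectionStruct.toMatrix).prod, hL⟩
      (HMul.hMul (α := Matrix.SpecialLinearGroup (Fin r) 𝔽) (β := Matrix.SpecialLinearGroup (Fin r) 𝔽) (γ := Matrix.SpecialLinearGroup (Fin r) 𝔽) ⟨Matrix.diagonal D, hD⟩ ⟨(L'.map Matrix.TransvectionStruct.toMatrix).prod, hL'⟩) :=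
    Subtype.ext (by rw [hM, mul_assoc]; rfl)
  rw [heq, C ⟨_, hL⟩, C ⟨Matrix.diagonal D, hD⟩ ⟨_, hL'⟩, hdiag ⟨Matrix.diagonal D, hD⟩ D rfl,
    f_tv_list htwo f C hdiag, f_tv_list htwo f C hdiag]
  simp

end core



def prodHom (𝔽 : Type u) [Field 𝔽] (r : ℕ) : (Fin r → 𝔽ˣ) →* 𝔽ˣ where
  toFun d := ∏ i, d i
  map_one' := by simp
  map_mul' a b := by simp [Finset.prod_mul_distrib]

def diagEmb (𝔽 : Type u) [Field 𝔽] (r : ℕ) :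
    (prodHom 𝔽 r).ker →* Matrix.SpecialLinearGroup (Fin r) 𝔽 where
  toFun d := ⟨Matrix.diagonal (fun i => (d.1 i : 𝔽)), by
    have h := d.2
    rw [MonoidHom.mem_ker] at h
    have h2 : ((prodHom 𝔽 r d.1 : 𝔽ˣ) : 𝔽) = 1 := by rw [h]; rfl
    have h3 : ((prodHom 𝔽 r d.1 : 𝔽ˣ) : 𝔽) = ∏ i, ((d.1 i : 𝔽ˣ) : 𝔽) :=
      map_prod (Units.coeHom 𝔽) d.1 Finset.univ
    rw [Matrix.det_diagonal, ← h3, h2]⟩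
  map_one' := Subtype.ext (by simp)
  map_mul' a b := Subtype.ext (by
    change Matrix.diagonal _ = Matrix.diagonal _ * Matrix.diagonal _
    rw [Matrix.diagonal_mul_diagonal]
    congr 1)

theorem diagEmb_val (d : (prodHom 𝔽 r).ker) :
    (diagEmb 𝔽 r d).val = Matrix.diagonal (fun i => (d.1 i : 𝔽)) := rfl

theorem card_ker_ne_zero (p : ℕ) [Fact p.Prime] [Fintype 𝔽] [CharP 𝔽 p] :
    ((Nat.card (prodHom 𝔽 r).ker : 𝔽)) ≠ 0 := by
  classical
  intro h0
  rw [CharP.cast_eq_zero_iff 𝔽 p] at h0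
  have h1 : Nat.card (prodHom 𝔽 r).ker ∣ Nat.card (Fin r → 𝔽ˣ) :=
    Subgroup.card_subgroup_dvd_card _
  have h2 : Nat.card (Fin r → 𝔽ˣ) = (Nat.card 𝔽ˣ) ^ r := by
    rw [Nat.card_pi, Finset.prod_const, Finset.card_univ, Fintype.card_fin]
  have h3 : p ∣ (Nat.card 𝔽ˣ) ^ r := h2 ▸ h0.trans h1
  have h4 : p ∣ Nat.card 𝔽ˣ := (Fact.out : p.Prime).dvd_of_dvd_pow h3
  have h5 : Nat.card 𝔽ˣ = Fintype.card 𝔽 - 1 := by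
    rw [Nat.card_eq_fintype_card, Fintype.card_units]
  have h6 : p ∣ Fintype.card 𝔽 := by
    obtain ⟨n, hn, hcard⟩ := FiniteField.card 𝔽 p
    rw [hcard]
    exact dvd_pow_self p (by positivity)
  have h7 : p ∣ 1 := by
    have := Nat.dvd_sub h6 (h5 ▸ h4)
    rwa [Nat.sub_sub_self Fintype.card_pos] at this
  exact Nat.Prime.one_lt (Fact.out : p.Prime) |>.ne' (Nat.dvd_one.mp h7)

theorem averaging [Fintype 𝔽] (hN : ((Nat.card (prodHom 𝔽 r).ker : 𝔽)) ≠ 0)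
    (f : Matrix.SpecialLinearGroup (Fin r) 𝔽 → (Fin r → 𝔽))
    (C : ∀ g h : Matrix.SpecialLinearGroup (Fin r) 𝔽, f (g * h) = g.val *ᵥ f h + f g) :
    ∃ x : Fin r → 𝔽, ∀ d : (prodHom 𝔽 r).ker,
      f (diagEmb 𝔽 r d) = (diagEmb 𝔽 r d).val *ᵥ x - x := by
  classical
  haveI : Finite 𝔽ˣ := Finite.of_injective (Units.val : 𝔽ˣ → 𝔽) Units.val_injective
  haveI : Fintype (prodHom 𝔽 r).ker := Fintype.ofFinite _
  set N : ℕ := Nat.card (prodHom 𝔽 r).ker with hNdef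
  set S : Fin r → 𝔽 := ∑ d : (prodHom 𝔽 r).ker, f (diagEmb 𝔽 r d) with hS
  have key : ∀ d : (prodHom 𝔽 r).ker,
      (N : 𝔽) • f (diagEmb 𝔽 r d) = S - (diagEmb 𝔽 r d).val *ᵥ S := by
    intro d
    have e1 : ∑ d' : (prodHom 𝔽 r).ker, f (diagEmb 𝔽 r (d * d')) = S :=
      Equiv.sum_comp (Equiv.mulLeft d) (fun e => f (diagEmb 𝔽 r e))
    have e2 : ∑ d' : (prodHom 𝔽 r).ker, f (diagEmb 𝔽 r (d * d'))
        = (diagEmb 𝔽 r d).val *ᵥ S + (N : 𝔽) • f (diagEmb 𝔽 r d) := by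
      have : ∀ d' : (prodHom 𝔽 r).ker, f (diagEmb 𝔽 r (d * d'))
          = (diagEmb 𝔽 r d).val *ᵥ f (diagEmb 𝔽 r d') + f (diagEmb 𝔽 r d) := by
        intro d'
        rw [_root_.map_mul]
        exact C _ _
      rw [Finset.sum_congr rfl fun d' _ => this d', Finset.sum_add_distrib,
        Finset.sum_const, Finset.card_univ]
      congr 1
      · rw [← Matrix.mulVecLin_apply, hS, map_sum]
        simp [Matrix.mulVecLin_apply]
      · rw [Nat.cast_smul_eq_nsmul, hNdef, Nat.card_eq_fintype_card]
    rw [e1] at e2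
    rw [eq_sub_iff_add_eq, add_comm]
    exact e2.symm
  refine ⟨-((N:𝔽)⁻¹ • S), fun d => ?_⟩
  have h1 : f (diagEmb 𝔽 r d) = (N:𝔽)⁻¹ • (S - (diagEmb 𝔽 r d).val *ᵥ S) := by
    rw [← key d, smul_smul, inv_mul_cancel₀ hN, one_smul]
  rw [h1]
  have h2 : (diagEmb 𝔽 r d).val *ᵥ (-((N:𝔽)⁻¹ • S)) = -((N:𝔽)⁻¹ • ((diagEmb 𝔽 r d).val *ᵥ S)) := by
    rw [← Matrix.mulVecLin_apply, _root_.map_neg, _root_.map_smul, Matrix.mulVecLin_apply]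
  rw [h2, smul_sub]
  abel

end SLH1Aux

/-- If `𝔽` is a finite field of characteristic `p ≠ 2` and `W = 𝔽^r`
(`r ≥ 1`) is the natural representation of `SL_r(𝔽)`, then `H¹(SL_r(𝔽), W) = 0`. -/
theorem h1_SL_natural_rep_eq_zero (p : ℕ) [Fact p.Prime] (𝔽 : Type u) [Field 𝔽] [Fintype 𝔽]
    [CharP 𝔽 p] (hp : p ≠ 2) (r : ℕ) (hr : 1 ≤ r) :
    Subsingleton (groupCohomology.H1 (Rep.of (slRep 𝔽 r))) := by
  classical
  refine subsingleton_of_forall_eq 0 fun y => ?_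
  induction y using groupCohomology.H1_induction_on with | h F => ?_
  rw [groupCohomology.H1π_eq_zero_iff, groupCohomology.coboundaries₁, LinearMap.mem_range]
  have htwo : (2 : 𝔽) ≠ 0 := by
    intro h2
    have : ((2 : ℕ) : 𝔽) = 0 := by exact_mod_cast h2
    rw [CharP.cast_eq_zero_iff 𝔽 p] at this
    exact hp ((Nat.prime_dvd_prime_iff_eq (Fact.out : p.Prime) Nat.prime_two).mp this)
  set f0 : Matrix.SpecialLinearGroup (Fin r) 𝔽 → (Fin r → 𝔽) := fun g => F g with hf0
  have C0 : ∀ g h : Matrix.SpecialLinearGroup (Fin r) 𝔽,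
      f0 (g * h) = g.val *ᵥ f0 h + f0 g := by
    intro g h
    exact (groupCohomology.mem_cocycles₁_iff (A := Rep.of (slRep 𝔽 r)) F).1 F.2 g h
  obtain ⟨x, hx⟩ := SLH1Aux.averaging (SLH1Aux.card_ker_ne_zero p) f0 C0
  set f1 : Matrix.SpecialLinearGroup (Fin r) 𝔽 → (Fin r → 𝔽) :=
    fun g => f0 g - (g.val *ᵥ x - x) with hf1
  have C1 : ∀ g h, f1 (g * h) = g.val *ᵥ f1 h + f1 g := by
    intro g h
    rw [hf1]
    simp only
    rw [C0 g h, Matrix.SpecialLinearGroup.coe_mul, ← Matrix.mulVec_mulVec,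
      Matrix.mulVec_sub, Matrix.mulVec_sub]
    abel
  have hdiag1 : ∀ (g : Matrix.SpecialLinearGroup (Fin r) 𝔽) (d : Fin r → 𝔽),
      g.val = Matrix.diagonal d → f1 g = 0 := by
    intro g d hgd
    have hdet : ∏ i, d i = 1 := by
      have := g.2
      rw [hgd, Matrix.det_diagonal] at this
      exact this
    have hne : ∀ i, d i ≠ 0 := by
      intro i hi
      rw [Finset.prod_eq_zero (Finset.mem_univ i) hi] at hdet
      exact zero_ne_one hdet
    set du : Fin r → 𝔽ˣ := fun i => Units.mk0 (d i) (hne i) with hdu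
    have hker : du ∈ (SLH1Aux.prodHom 𝔽 r).ker := by
      rw [MonoidHom.mem_ker]
      apply Units.ext
      have h5 : ((∏ i, du i : 𝔽ˣ) : 𝔽) = ∏ i, ((du i : 𝔽ˣ) : 𝔽) :=
        map_prod (Units.coeHom 𝔽) du Finset.univ
      show ((∏ i, du i : 𝔽ˣ) : 𝔽) = 1
      rw [h5]
      simpa [hdu] using hdet
    have hgeq : g = SLH1Aux.diagEmb 𝔽 r ⟨du, hker⟩ := by
      apply Subtype.ext
      rw [SLH1Aux.diagEmb_val, hgd]
      rfl
    rw [hf1]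
    simp only
    rw [hgeq, hx ⟨du, hker⟩]
    abel
  have hvan := SLH1Aux.f_vanish htwo f1 C1 hdiag1
  refine ⟨x, funext fun g => ?_⟩
  have h1 := hvan g
  rw [hf1] at h1
  simp only at h1
  show (slRep 𝔽 r) g x - x = f0 g
  show g.val *ᵥ x - x = f0 g
  exact (sub_eq_zero.mp h1).symm
end

section
/- Let 𝔽 be a finite field of characteristic 2 and let H be a subgroup of SL₂(𝔽) that is isomorphic to the dihedral group D_{2n} of order 2n with n odd. Let V = 𝔽² be the natural 2-dimensional representation, with H acting by restriction of the action of SL₂(𝔽) by matrix-vector multiplication. Then H¹(H, V) = 0. -/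
open groupCohomology

universe u

variable {𝔽 : Type*} [Field 𝔽] [CharP 𝔽 2]

lemma aux_sq_eq_one (M : Matrix (Fin 2) (Fin 2) 𝔽) (hdet : M.det = 1)
    (w : Fin 2 → 𝔽) (hw : w ≠ 0) (hfix : M.mulVec w = w) : M * M = 1 := by
  have h2 : (2 : 𝔽) = 0 := by exact_mod_cast CharP.cast_eq_zero 𝔽 2
  have h0 : (M - 1).mulVec w = 0 := by
    rw [Matrix.sub_mulVec, hfix, Matrix.one_mulVec, sub_self]
  have hd : (M - 1).det = 0 := (Matrix.exists_mulVec_eq_zero_iff).1 ⟨w, hw, h0⟩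
  rw [Matrix.det_fin_two] at hdet
  norm_num [Matrix.det_fin_two, Matrix.one_apply] at hd
  have htr : M 0 0 + M 1 1 = 0 := by linear_combination hdet - hd + h2
  ext i j
  fin_cases i <;> fin_cases j <;>
    norm_num [Matrix.mul_apply, Fin.sum_univ_two, Matrix.one_apply]
  · linear_combination hdet + M 0 0 * htr - (M 0 0 * M 1 1 - M 0 1 * M 1 0) * h2
  · linear_combination M 0 1 * htr
  · linear_combination M 1 0 * htr
  · linear_combination hdet + M 1 1 * htr - (M 0 0 * M 1 1 - M 0 1 * M 1 0) * h2

lemma aux_exists_of_sq (M : Matrix (Fin 2) (Fin 2) 𝔽) (h1 : M * M = 1) (hne : M ≠ 1)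
    (w : Fin 2 → 𝔽) (hw : M.mulVec w = w) : ∃ u, M.mulVec u - u = w := by
  have h2 : (2 : 𝔽) = 0 := by exact_mod_cast CharP.cast_eq_zero 𝔽 2
  set N : Matrix (Fin 2) (Fin 2) 𝔽 := M - 1 with hN
  have hNsq : N * N = 0 := by
    have hh : N * N = M * M - M - M + 1 := by rw [hN]; noncomm_ring
    rw [h1] at hh
    rw [hh]
    ext i j
    simp only [Matrix.add_apply, Matrix.sub_apply, Matrix.zero_apply]
    linear_combination ((1 : Matrix (Fin 2) (Fin 2) 𝔽) i j - M i j) * h2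
  set L := N.mulVecLin with hL
  have hle : LinearMap.range L ≤ LinearMap.ker L := by
    rintro _ ⟨v, rfl⟩
    simp only [LinearMap.mem_ker, hL, Matrix.mulVecLin_apply, Matrix.mulVec_mulVec, hNsq,
      Matrix.zero_mulVec]
  have hLne : L ≠ 0 := by
    intro h
    apply hne
    have : N = 0 := by
      ext i j
      have := congrFun (congrArg DFunLike.coe h) (Pi.single j 1)
      have h3 := congrFun this i
      rw [hL] at h3
      simpa [Matrix.mulVecLin_apply, Matrix.mulVec_single] using h3
    rw [hN, sub_eq_zero] at this
    exact this
  have hfr : Module.finrank 𝔽 (LinearMap.range L) + Module.finrank 𝔽 (LinearMap.ker L) = 2 := by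
    rw [LinearMap.finrank_range_add_finrank_ker L, Module.finrank_pi]
    simp
  have hr0 : Module.finrank 𝔽 (LinearMap.range L) ≠ 0 := by
    intro h
    rw [Submodule.finrank_eq_zero] at h
    exact hLne (LinearMap.range_eq_bot.1 h)
  have hrk : Module.finrank 𝔽 (LinearMap.range L) ≤ Module.finrank 𝔽 (LinearMap.ker L) :=
    Submodule.finrank_mono hle
  have heq : LinearMap.range L = LinearMap.ker L :=
    Submodule.eq_of_le_of_finrank_eq hle (by omega)
  have hwker : w ∈ LinearMap.ker L := by
    simp only [LinearMap.mem_ker, hL, Matrix.mulVecLin_apply, hN, Matrix.sub_mulVec, hw,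
      Matrix.one_mulVec, sub_self]
  rw [← heq] at hwker
  obtain ⟨u, hu⟩ := hwker
  exact ⟨u, by simpa [hL, hN, Matrix.sub_mulVec, Matrix.one_mulVec] using hu⟩

/-- If `𝔽` is a finite field of characteristic `2` and `H ≤ SL₂(𝔽)` is
isomorphic to the dihedral group of order `2n` with `n` odd, then `H¹(H, 𝔽²) = 0` for the
natural representation. -/
theorem h1_dihedral_subgroup_eq_zero (𝔽 : Type u) [Field 𝔽] [Fintype 𝔽] [CharP 𝔽 2]
    (H : Subgroup (Matrix.SpecialLinearGroup (Fin 2) 𝔽)) (n : ℕ) (hn : Odd n)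
    (hH : Nonempty (H ≃* DihedralGroup n)) :
    Subsingleton (groupCohomology.H1
      (Rep.of (MonoidHom.comp (slRep 𝔽 2) H.subtype))) := by
  obtain ⟨e⟩ := hH
  haveI : NeZero n := ⟨hn.pos.ne'⟩
  set G := Matrix.SpecialLinearGroup (Fin 2) 𝔽 with hG
  set A : Rep 𝔽 ↥H := Rep.of (MonoidHom.comp (slRep 𝔽 2) H.subtype) with hA
  suffices hall : ∀ x : H1 A, x = 0 from ⟨fun x y => (hall x).trans (hall y).symm⟩
  intro x
  induction x using H1_induction_on with | h f => ?_
  rw [H1π_eq_zero_iff]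
  suffices hh : ∃ x : A, ∀ g : ↥H, A.ρ g x - x = f g by
    obtain ⟨x, hx⟩ := hh
    exact ⟨x, funext fun g => by simpa [d₀₁_hom_apply] using hx g⟩
  -- basic characteristic-2 facts
  have h2 : (2 : 𝔽) = 0 := by exact_mod_cast CharP.cast_eq_zero 𝔽 2
  have hneg : ∀ v : Fin 2 → 𝔽, -v = v := fun v => funext fun i => CharTwo.neg_eq _
  have hswap : ∀ a b : Fin 2 → 𝔽, a - b = b - a := fun a b => by rw [← neg_sub, hneg]
  have hcast : (n : 𝔽) = 1 := by
    obtain ⟨m, hm⟩ := hn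
    subst hm
    push_cast
    rw [h2]
    ring
  -- the action, in concrete terms
  set ρ' : ↥H → (Fin 2 → 𝔽) → (Fin 2 → 𝔽) :=
    fun g v => ((g : G) : Matrix (Fin 2) (Fin 2) 𝔽).mulVec v with hρ'
  set F : ↥H → (Fin 2 → 𝔽) := fun g => f g with hF
  have hcocy : ∀ g h : ↥H, F (g * h) = ρ' g (F h) + F g :=
    (mem_cocycles₁_iff (f : ↥H → (Fin 2 → 𝔽))).1 f.2
  have hone : ∀ v, ρ' (1 : ↥H) v = v := fun v => Matrix.one_mulVec v
  have hcomp : ∀ (g h : ↥H) (v : Fin 2 → 𝔽), ρ' g (ρ' h v) = ρ' (g * h) v := fun g h v =>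
    Matrix.mulVec_mulVec v _ _
  have hsub : ∀ (g : ↥H) (a b : Fin 2 → 𝔽), ρ' g (a - b) = ρ' g a - ρ' g b := fun g a b =>
    Matrix.mulVec_sub _ a b
  have hadd : ∀ (g : ↥H) (a b : Fin 2 → 𝔽), ρ' g (a + b) = ρ' g a + ρ' g b := fun g a b =>
    Matrix.mulVec_add _ a b
  -- notation for the elements of H
  set R : ZMod n → ↥H := fun j => e.symm (DihedralGroup.r j) with hR
  set Sr : ZMod n → ↥H := fun j => e.symm (DihedralGroup.sr j) with hSr
  set σ : ↥H := e.symm (DihedralGroup.sr 0) with hσ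
  have hRdef : ∀ j : ZMod n, e.symm (DihedralGroup.r j) = R j := fun _ => rfl
  have hSrdef : ∀ j : ZMod n, e.symm (DihedralGroup.sr j) = Sr j := fun _ => rfl
  have hσSr : σ = Sr 0 := rfl
  have hRmul : ∀ j i : ZMod n, R j * R i = R (j + i) := by
    intro j i
    rw [hR]
    simp only [← map_mul, DihedralGroup.r_mul_r]
  have hmulσR : ∀ j : ZMod n, σ * R j = Sr j := by
    intro j
    rw [hσ, hR, hSr]
    simp only [← map_mul, DihedralGroup.sr_mul_r, zero_add]
  have hmulRσ : ∀ j : ZMod n, R j * σ = Sr (-j) := by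
    intro j
    rw [hσ, hR, hSr]
    simp only [← map_mul, DihedralGroup.r_mul_sr, zero_sub]
  have hσσ : σ * σ = 1 := by
    rw [hσ, ← map_mul, ← map_one e.symm]
    congr 1
    rw [DihedralGroup.sr_mul_sr, sub_self, DihedralGroup.one_def]
  -- the averaged vector S
  set S : Fin 2 → 𝔽 := ∑ i : ZMod n, F (R i) with hSdef
  have hS : ∀ j : ZMod n, F (R j) = ρ' (R j) S - S := by
    intro j
    have hmapsum : ∑ i : ZMod n, ρ' (R j) (F (R i)) = ρ' (R j) S := by
      rw [hSdef]
      exact (map_sum (Matrix.mulVecLin (((R j : G) : Matrix (Fin 2) (Fin 2) 𝔽))) _ _).symm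
    have e1 : S = ρ' (R j) S + (n : 𝔽) • F (R j) := by
      calc S = ∑ i : ZMod n, F (R (j + i)) :=
            (Fintype.sum_equiv (Equiv.addLeft j) _ _ fun i => rfl).symm
        _ = ∑ i : ZMod n, F (R j * R i) := by simp_rw [hRmul]
        _ = ∑ i : ZMod n, (ρ' (R j) (F (R i)) + F (R j)) :=
            Finset.sum_congr rfl fun i _ => hcocy (R j) (R i)
        _ = (∑ i : ZMod n, ρ' (R j) (F (R i))) + (n : 𝔽) • F (R j) := by
            rw [Finset.sum_add_distrib, Finset.sum_const, Finset.card_univ, ZMod.card,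
              Nat.cast_smul_eq_nsmul 𝔽]
        _ = ρ' (R j) S + (n : 𝔽) • F (R j) := by rw [hmapsum]
    rw [hcast, one_smul] at e1
    rw [hswap]
    have := eq_sub_of_add_eq' e1.symm
    exact this
  -- the defect vector w
  set w : Fin 2 → 𝔽 := F σ - (ρ' σ S - S) with hwdef
  have hFσ : F σ = ρ' σ S - S + w := by rw [hwdef]; abel
  have h_sr : ∀ j : ZMod n, F (Sr j) = ρ' (Sr j) S - S + w := by
    intro j
    have h1 := hcocy σ (R j)
    rw [hmulσR j, hS j, hsub, hcomp, hmulσR j, hFσ] at h1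
    rw [h1]
    abel
  have hfixσ : ρ' σ w = w := by
    have h1 := hcocy σ σ
    rw [hσσ] at h1
    have h0 : F (1 : ↥H) = 0 := cocycles₁_map_one f
    rw [h0, hFσ, hadd, hsub, hcomp, hσσ, hone] at h1
    have step1 : ρ' σ w + w = 0 := by linear_combination (norm := module) -h1
    rw [eq_neg_of_add_eq_zero_left step1, hneg]
  have hfixR : ∀ j : ZMod n, ρ' (R j) w = w := by
    intro j
    have h1 := hcocy (R j) σ
    rw [hmulRσ j, h_sr (-j), hFσ, hadd, hsub, hcomp, hmulRσ j, hS j] at h1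
    linear_combination (norm := module) -h1
  rcases eq_or_ne n 1 with hn1 | hn1
  · -- the case n = 1
    subst hn1
    set M : Matrix (Fin 2) (Fin 2) 𝔽 := ((σ : G) : Matrix (Fin 2) (Fin 2) 𝔽) with hM
    have hσG : M * M = 1 := by
      rw [show M * M = (((σ * σ : ↥H) : G) : Matrix (Fin 2) (Fin 2) 𝔽) from rfl, hσσ]
      rfl
    have hneq : M ≠ 1 := by
      intro h
      have h1 : σ = (1 : ↥H) := Subtype.ext (Subtype.ext h)
      have h2' := congrArg e h1
      rw [hσ, e.apply_symm_apply, map_one, DihedralGroup.one_def] at h2'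
      cases h2'.trans DihedralGroup.one_def
    obtain ⟨u, hu⟩ := aux_exists_of_sq M hσG hneq w hfixσ
    refine ⟨S + u, fun g => ?_⟩
    show ρ' g (S + u) - (S + u) = F g
    have hg : g = e.symm (e g) := (e.symm_apply_apply g).symm
    rcases he : e g with j | j
    · have hj : j = 0 := Subsingleton.elim _ _
      have hg1 : g = 1 := by
        rw [hg, he, hj, ← DihedralGroup.one_def, map_one]
      rw [hg1, hone]
      have h0 : F (1 : ↥H) = 0 := cocycles₁_map_one f
      rw [h0, sub_self]
    · have hj : j = 0 := Subsingleton.elim _ _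
      have hgσ : g = σ := by rw [hg, he, hj, hσ]
      rw [hgσ, hFσ, hadd]
      have hu' : ρ' σ u - u = w := hu
      linear_combination (norm := module) hu'
  · -- the case n ≠ 1 : w = 0
    have hw0 : w = 0 := by
      by_contra hw
      set M : Matrix (Fin 2) (Fin 2) 𝔽 := ((R 1 : G) : Matrix (Fin 2) (Fin 2) 𝔽) with hM
      have hdet : M.det = 1 := (R 1 : G).2
      have hsq := aux_sq_eq_one M hdet w hw (hfixR 1)
      have h1' : R 1 * R 1 = 1 := Subtype.ext (Subtype.ext hsq)
      rw [hRmul] at h1'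
      have h1'' := congrArg e h1'
      rw [hR] at h1''
      simp only [e.apply_symm_apply, map_one, DihedralGroup.one_def] at h1''
      have h20 : ((2 : ℕ) : ZMod n) = 0 := by
        have := DihedralGroup.r.inj h1''
        push_cast
        exact_mod_cast this
      have hdvd : n ∣ 2 := (ZMod.natCast_eq_zero_iff 2 n).1 h20
      rcases (Nat.dvd_prime Nat.prime_two).1 hdvd with h | h
      · exact hn1 h
      · rw [h] at hn
        exact (Nat.not_odd_iff_even.2 (by norm_num)) hn
    refine ⟨S, fun g => ?_⟩
    show ρ' g S - S = F g
    have hg : g = e.symm (e g) := (e.symm_apply_apply g).symm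
    rcases he : e g with j | j
    · rw [hg, he, hRdef j]
      exact (hS j).symm
    · rw [hg, he, hSrdef j]
      rw [h_sr j, hw0, add_zero]
end

section
/- Let 𝔽 be a finite field of characteristic p with p > 2 and let H be a subgroup of SL₂(𝔽) of even order (2 divides |H|). Let V = 𝔽² be the natural 2-dimensional representation, with H acting by restriction of the action of SL₂(𝔽) by matrix-vector multiplication. Then H¹(H, V) = 0. -/
open groupCohomology

universe u

/-- An element of order dividing 2 in SL₂ over a field of characteristic ≠ 2 which is not 1
is the matrix -1. -/
lemma sl2_sq_eq_one (𝔽 : Type u) [Field 𝔽] (htwo : (2:𝔽) ≠ 0)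
    (g : Matrix.SpecialLinearGroup (Fin 2) 𝔽) (hg2 : g ^ 2 = 1) (hg1 : g ≠ 1) :
    (g : Matrix (Fin 2) (Fin 2) 𝔽) = -1 := by
  set M : Matrix (Fin 2) (Fin 2) 𝔽 := (g : Matrix (Fin 2) (Fin 2) 𝔽) with hM
  have hdet : M.det = 1 := g.2
  have hsq : M * M = 1 := by
    have : ((g^2 : _) : Matrix (Fin 2) (Fin 2) 𝔽) = ((1:Matrix.SpecialLinearGroup (Fin 2) 𝔽) : Matrix (Fin 2) (Fin 2) 𝔽) := by rw [hg2]
    simpa [pow_two] using this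
  have hne : M ≠ 1 := by
    intro h
    exact hg1 (Subtype.ext h)
  set a := M 0 0; set b := M 0 1; set c := M 1 0; set d := M 1 1
  have hMeta : M = !![a, b; c, d] := (Matrix.etaExpand_eq M).symm
  rw [Matrix.det_fin_two] at hdet
  have h11 : a * a + b * c = 1 := by
    have := congrFun (congrFun hsq 0) 0
    simpa [Matrix.mul_apply, Fin.sum_univ_two, Matrix.one_apply] using this
  have h12 : a * b + b * d = 0 := by
    have := congrFun (congrFun hsq 0) 1
    simpa [Matrix.mul_apply, Fin.sum_univ_two, Matrix.one_apply] using this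
  have h21 : c * a + d * c = 0 := by
    have := congrFun (congrFun hsq 1) 0
    simpa [Matrix.mul_apply, Fin.sum_univ_two, Matrix.one_apply] using this
  have h22 : c * b + d * d = 1 := by
    have := congrFun (congrFun hsq 1) 1
    simpa [Matrix.mul_apply, Fin.sum_univ_two, Matrix.one_apply] using this
  have had : a + d ≠ 0 := by
    intro h0
    apply htwo
    have : a * (a + d) = 2 := by
      have : a * a + a * d = 2 := by
        have hd' : a * d - b * c = 1 := hdet
        linear_combination h11 + hd'
      linear_combination this
    rw [h0, mul_zero] at this
    exact this.symm
  have hb : b = 0 := by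
    rcases mul_eq_zero.1 (show b * (a + d) = 0 by linear_combination h12) with h | h
    · exact h
    · exact absurd h had
  have hc : c = 0 := by
    rcases mul_eq_zero.1 (show c * (a + d) = 0 by linear_combination h21) with h | h
    · exact h
    · exact absurd h had
  have ha2 : a * a = 1 := by rw [hb] at h11; simpa using h11
  have hd2 : d * d = 1 := by rw [hc] at h22; simpa using h22
  have hadet : a * d = 1 := by linear_combination hdet + hb * c
  have hda : d = a := by
    have : a * (d - a) = 0 := by linear_combination hadet - ha2
    rcases mul_eq_zero.1 this with h | h
    · exfalso; rw [h] at hadet; simp at hadet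
    · linear_combination h
  have ha : a = -1 := by
    rcases mul_self_eq_one_iff.1 ha2 with h | h
    · exfalso; apply hne; rw [hMeta, hb, hc, hda, h, Matrix.one_fin_two]
    · exact h
  rw [hMeta, hb, hc, hda, ha]
  ext i j
  fin_cases i <;> fin_cases j <;> simp [Matrix.one_apply]

/-- If `𝔽` is a finite field of characteristic `p > 2` and `H ≤ SL₂(𝔽)` has
even order, then `H¹(H, 𝔽²) = 0` for the natural representation. -/
theorem h1_even_order_subgroup_eq_zero (p : ℕ) [Fact p.Prime] (𝔽 : Type u) [Field 𝔽]
    [Fintype 𝔽] [CharP 𝔽 p] (hp : 2 < p)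
    (H : Subgroup (Matrix.SpecialLinearGroup (Fin 2) 𝔽)) (hH : 2 ∣ Nat.card H) :
    Subsingleton (groupCohomology.H1
      (Rep.of (MonoidHom.comp (slRep 𝔽 2) H.subtype))) := by
  set A := Rep.of (MonoidHom.comp (slRep 𝔽 2) H.subtype) with hA
  have htwo : (2:𝔽) ≠ 0 := by
    intro h
    have h2 : ((2:ℕ):𝔽) = 0 := by exact_mod_cast h
    have hdvd : p ∣ 2 := (CharP.cast_eq_zero_iff 𝔽 p 2).1 h2
    have := Nat.le_of_dvd (by norm_num) hdvd
    omega
  haveI : Finite (Matrix.SpecialLinearGroup (Fin 2) 𝔽) := by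
    classical exact Subtype.finite
  haveI : Fact (Nat.Prime 2) := ⟨Nat.prime_two⟩
  obtain ⟨z, hz⟩ := exists_prime_orderOf_dvd_card' (G := ↥H) 2 hH
  have hz2 : z ^ 2 = 1 := by have := pow_orderOf_eq_one z; rwa [hz] at this
  have hz1 : z ≠ 1 := by
    intro h; rw [h, orderOf_one] at hz; omega
  have hzc2 : (z : Matrix.SpecialLinearGroup (Fin 2) 𝔽) ^ 2 = 1 := by
    exact_mod_cast hz2
  have hzc1 : (z : Matrix.SpecialLinearGroup (Fin 2) 𝔽) ≠ 1 := by
    intro h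
    exact hz1 (Subtype.ext h)
  have hMz : ((z : Matrix.SpecialLinearGroup (Fin 2) 𝔽) : Matrix (Fin 2) (Fin 2) 𝔽) = -1 :=
    sl2_sq_eq_one 𝔽 htwo _ hzc2 hzc1
  -- the action of z is -id
  have hρz : ∀ w : Fin 2 → 𝔽, A.ρ z w = -w := by
    intro w
    show Matrix.mulVec ((z : Matrix.SpecialLinearGroup (Fin 2) 𝔽) : Matrix (Fin 2) (Fin 2) 𝔽) w = -w
    rw [hMz, Matrix.neg_mulVec, Matrix.one_mulVec]
  -- z is central
  have hcomm : ∀ h : ↥H, z * h = h * z := by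
    intro h
    apply Subtype.ext
    apply Subtype.ext
    show ((z:Matrix.SpecialLinearGroup (Fin 2) 𝔽):Matrix (Fin 2) (Fin 2) 𝔽) * _ =
      _ * ((z:Matrix.SpecialLinearGroup (Fin 2) 𝔽):Matrix (Fin 2) (Fin 2) 𝔽)
    rw [hMz, neg_one_mul, mul_neg_one]
  refine subsingleton_of_forall_eq 0 fun x => ?_
  refine H1_induction_on x fun f => ?_
  rw [H1π_eq_zero_iff]
  refine ⟨(-(2⁻¹:𝔽)) • (f z : Fin 2 → 𝔽), funext fun h => ?_⟩
  rw [d₀₁_hom_apply]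
  have hcoc := (mem_cocycles₁_iff (f : ↥H → (Fin 2 → 𝔽))).1 f.2
  have e : A.ρ z (f h) + f z = A.ρ h (f z) + f h := by
    rw [← hcoc z h, hcomm h, hcoc h z]
  rw [hρz] at e
  rw [map_smul]
  have h2 : (2:𝔽) • (f h : Fin 2 → 𝔽) = (f z : Fin 2 → 𝔽) - A.ρ h (f z) := by
    linear_combination (norm := module) -e
  linear_combination (norm := match_scalars <;> field_simp <;> ring) (-(2⁻¹:𝔽)) • h2
end

section
/- Let 𝔽 be a finite field of characteristic p, let Λ ⊆ 𝔽 be an 𝔽_p-linear subspace of dimension k = dim_{𝔽_p} Λ, and let Q = { (1, λ; 0, 1) : λ ∈ Λ } be the corresponding subgroup of upper-triangular unipotent matrices in SL₂(𝔽), acting on V = 𝔽² by matrix-vector multiplication. Then the 𝔽-vector space H¹(Q, V) has dimension dim_𝔽 H¹(Q, V) = k if p > 2, and dim_𝔽 H¹(Q, V) = k − 1 if p = 2 and k ≥ 1. -/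
open groupCohomology

universe u

/-- The unipotent upper-triangular matrix `(1, l; 0, 1)` as an element of `SL₂(𝔽)`. -/
def unipMat {𝔽 : Type u} [Field 𝔽] (l : 𝔽) : Matrix.SpecialLinearGroup (Fin 2) 𝔽 :=
  ⟨!![1, l; 0, 1], by simp [Matrix.det_fin_two_of]⟩

theorem unipMat_mul {𝔽 : Type u} [Field 𝔽] (a b : 𝔽) :
    unipMat a * unipMat b = unipMat (a + b) := by
  apply Subtype.ext
  rw [Matrix.SpecialLinearGroup.coe_mul]
  simp [unipMat, Matrix.mul_fin_two, add_comm]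

theorem unipMat_zero {𝔽 : Type u} [Field 𝔽] : unipMat (0 : 𝔽) = 1 := by
  apply Subtype.ext
  simp [unipMat, Matrix.SpecialLinearGroup.coe_one, Matrix.one_fin_two]

/-- The subgroup `{(1, λ; 0, 1) : λ ∈ Λ}` of `SL₂(𝔽)` attached to an additive
subgroup `Λ ⊆ 𝔽`. -/
def unipSubgroup {𝔽 : Type u} [Field 𝔽] (Λ : AddSubgroup 𝔽) :
    Subgroup (Matrix.SpecialLinearGroup (Fin 2) 𝔽) where
  carrier := {A | ∃ l ∈ Λ, A = unipMat l}
  one_mem' := ⟨0, Λ.zero_mem, unipMat_zero.symm⟩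
  mul_mem' := by
    rintro _ _ ⟨a, ha, rfl⟩ ⟨b, hb, rfl⟩
    exact ⟨a + b, Λ.add_mem ha hb, unipMat_mul a b⟩
  inv_mem' := by
    rintro _ ⟨a, ha, rfl⟩
    exact ⟨-a, Λ.neg_mem ha,
      inv_eq_of_mul_eq_one_right (by rw [unipMat_mul, add_neg_cancel, unipMat_zero])⟩

section Shim
variable {k G : Type u} [CommRing k] [Group G] (A : Rep k G)

abbrev oneCocycles : Submodule k (G → A) := cocycles₁ A

abbrev dZero : A →ₗ[k] (G → A) := (d₀₁ A).hom

abbrev oneCoboundaries : Submodule k (oneCocycles A) :=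
  LinearMap.range ((dZero A).codRestrict (oneCocycles A) fun c => d₀₁_apply_mem_cocycles₁ c)

end Shim

section Aux
variable {𝔽 : Type u} [Field 𝔽] (Λ : AddSubgroup 𝔽)

abbrev Qgrp : Subgroup (Matrix.SpecialLinearGroup (Fin 2) 𝔽) := unipSubgroup Λ

noncomputable abbrev ARep : Rep 𝔽 (Qgrp Λ) :=
  Rep.of (MonoidHom.comp (slRep 𝔽 2) (unipSubgroup Λ).subtype)

variable {Λ}

/-- entry extraction -/
def ent (g : Qgrp Λ) : 𝔽 := g.1.1 0 1

theorem coe_eq_unipMat (g : Qgrp Λ) : g.1 = unipMat (ent g) := by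
  obtain ⟨l, hl, h⟩ := g.2
  rw [ent, h]; rfl

theorem ent_mem (g : Qgrp Λ) : ent g ∈ Λ := by
  obtain ⟨l, hl, h⟩ := g.2
  simpa [ent, h, unipMat] using hl

def uQ (l : 𝔽) (hl : l ∈ Λ) : Qgrp Λ := ⟨unipMat l, l, hl, rfl⟩

@[simp] theorem ent_uQ (l : 𝔽) (hl : l ∈ Λ) : ent (uQ l hl) = l := by
  simp [ent, uQ, unipMat]

theorem ent_mul (g h : Qgrp Λ) : ent (g * h) = ent g + ent h := by
  have : (g * h).1 = g.1 * h.1 := rfl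
  rw [show ent (g*h) = (g.1*h.1).1 0 1 from rfl, coe_eq_unipMat g, coe_eq_unipMat h,
    unipMat_mul]
  simp [unipMat]

theorem uQ_ent (g : Qgrp Λ) : uQ (ent g) (ent_mem g) = g :=
  Subtype.ext (coe_eq_unipMat g).symm

theorem rho_apply (g : Qgrp Λ) (v : Fin 2 → 𝔽) :
    ((ARep Λ).ρ g) v = ![v 0 + ent g * v 1, v 1] := by
  show slRep 𝔽 2 g.1 v = _
  have : slRep 𝔽 2 g.1 v = g.1.1.mulVec v := by
    simp [slRep, glRep, Matrix.GeneralLinearGroup.coe_toLin]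
  rw [this, coe_eq_unipMat g]
  show (!![1, ent g; 0, 1]).mulVec v = _
  funext i
  fin_cases i <;> simp [Matrix.mulVec, dotProduct, Fin.sum_univ_two, Matrix.vecHead, Matrix.vecTail]

end Aux

section Aux2
variable {𝔽 : Type u} [Field 𝔽] {Λ : AddSubgroup 𝔽}

noncomputable def Phi (g₀ : Qgrp Λ) : oneCocycles (ARep Λ) →ₗ[𝔽] 𝔽 where
  toFun f := (f g₀ : Fin 2 → 𝔽) 1
  map_add' f g := rfl
  map_smul' c f := rfl

theorem Phi_apply (g₀ : Qgrp Λ) (f : oneCocycles (ARep Λ)) :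
    Phi g₀ f = (f g₀ : Fin 2 → 𝔽) 1 := rfl

theorem cocycle_rel (f : oneCocycles (ARep Λ)) (g h : Qgrp Λ) :
    (f (g * h) : Fin 2 → 𝔽) =
      ![(f h : Fin 2 → 𝔽) 0 + ent g * (f h : Fin 2 → 𝔽) 1 + (f g : Fin 2 → 𝔽) 0,
        (f h : Fin 2 → 𝔽) 1 + (f g : Fin 2 → 𝔽) 1] := by
  have := (mem_cocycles₁_iff (A := ARep Λ) f).1 f.2 g h
  rw [this, rho_apply]
  funext i
  fin_cases i <;> simp [Pi.add_apply]

theorem cocycle_rel₀ (f : oneCocycles (ARep Λ)) (g h : Qgrp Λ) :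
    (f (g * h) : Fin 2 → 𝔽) 0 =
      (f h : Fin 2 → 𝔽) 0 + ent g * (f h : Fin 2 → 𝔽) 1 + (f g : Fin 2 → 𝔽) 0 := by
  rw [cocycle_rel]; simp

theorem cocycle_rel₁ (f : oneCocycles (ARep Λ)) (g h : Qgrp Λ) :
    (f (g * h) : Fin 2 → 𝔽) 1 = (f h : Fin 2 → 𝔽) 1 + (f g : Fin 2 → 𝔽) 1 := by
  rw [cocycle_rel]; simp

theorem Qgrp_mul_comm (g h : Qgrp Λ) : g * h = h * g := by
  apply Subtype.ext
  show g.1 * h.1 = h.1 * g.1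
  rw [coe_eq_unipMat g, coe_eq_unipMat h, unipMat_mul, unipMat_mul, add_comm]

/-- symmetry -/
theorem cocycle_symm (f : oneCocycles (ARep Λ)) (g h : Qgrp Λ) :
    ent g * (f h : Fin 2 → 𝔽) 1 = ent h * (f g : Fin 2 → 𝔽) 1 := by
  have h1 := cocycle_rel₀ f g h
  have h2 := cocycle_rel₀ f h g
  rw [Qgrp_mul_comm] at h1
  rw [h1] at h2
  linear_combination h2

theorem snd_eq_zero_of_ker {g₀ : Qgrp Λ} (hg₀ : ent g₀ ≠ 0)
    (f : oneCocycles (ARep Λ)) (hf : Phi g₀ f = 0) (g : Qgrp Λ) :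
    (f g : Fin 2 → 𝔽) 1 = 0 := by
  have := cocycle_symm f g₀ g
  rw [Phi_apply] at hf
  rw [hf, mul_zero] at this
  exact (mul_eq_zero.1 this).resolve_left hg₀

end Aux2

section Aux3
variable {p : ℕ} {𝔽 : Type u} [Field 𝔽] [Algebra (ZMod p) 𝔽]
  (Λ : Submodule (ZMod p) 𝔽)

theorem ent_mem' (g : Qgrp Λ.toAddSubgroup) : ent g ∈ Λ :=
  (Submodule.mem_toAddSubgroup _).1 (ent_mem g)

def uQ' (l : Λ) : Qgrp Λ.toAddSubgroup := uQ l.1 ((Submodule.mem_toAddSubgroup _).2 l.2)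

theorem uQ'_add (a b : Λ) : uQ' Λ (a + b) = uQ' Λ a * uQ' Λ b := by
  apply Subtype.ext
  show unipMat _ = unipMat _ * unipMat _
  rw [unipMat_mul]; rfl

theorem uQ'_zero : uQ' Λ 0 = 1 := Subtype.ext unipMat_zero

theorem ent_uQ' (l : Λ) : ent (uQ' Λ l) = l.1 := ent_uQ _ _

theorem uQ'_ent (g : Qgrp Λ.toAddSubgroup) : uQ' Λ ⟨ent g, ent_mem' Λ g⟩ = g := uQ_ent g

/-- the first-component map of a cocycle, as a `ZMod p`-linear map on `Λ`. -/
noncomputable def kerX {g₀ : Qgrp Λ.toAddSubgroup} (hg₀ : ent g₀ ≠ 0)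
    (f : LinearMap.ker (Phi (Λ := Λ.toAddSubgroup) g₀)) : Λ →ₗ[ZMod p] 𝔽 :=
  AddMonoidHom.toZModLinearMap p (AddMonoidHom.mk'
    (fun l => ((f : oneCocycles (ARep Λ.toAddSubgroup)) (uQ' Λ l) : Fin 2 → 𝔽) 0)
    (by
      intro a b
      simp only [uQ'_add]
      rw [cocycle_rel₀, snd_eq_zero_of_ker hg₀ f.1 f.2]
      ring))

theorem kerX_apply {g₀ : Qgrp Λ.toAddSubgroup} (hg₀ : ent g₀ ≠ 0)
    (f : LinearMap.ker (Phi (Λ := Λ.toAddSubgroup) g₀)) (l : Λ) :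
    kerX Λ hg₀ f l = ((f : oneCocycles (ARep Λ.toAddSubgroup)) (uQ' Λ l) : Fin 2 → 𝔽) 0 := rfl

/-- a linear functional on `Λ` gives a cocycle. -/
noncomputable def ofLin (x : Λ →ₗ[ZMod p] 𝔽) : oneCocycles (ARep Λ.toAddSubgroup) :=
  ⟨fun g => ![x ⟨ent g, ent_mem' Λ g⟩, 0], by
    rw [mem_cocycles₁_iff]
    intro g h
    rw [rho_apply]
    have h1 : (⟨ent (g * h), ent_mem' Λ (g * h)⟩ : Λ)
        = ⟨ent g, ent_mem' Λ g⟩ + ⟨ent h, ent_mem' Λ h⟩ := Subtype.ext (ent_mul g h)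
    funext i
    fin_cases i
    · show x ⟨ent (g * h), _⟩ = _
      rw [h1, map_add]
      show _ = (![_, _] 0 + ent g * ![(_:𝔽), _] 1) + ![(_:𝔽), _] 0
      simp [add_comm]
    · show (0 : 𝔽) = ![(_:𝔽),_] 1 + ![(_:𝔽),_] 1
      simp⟩

theorem ofLin_apply (x : Λ →ₗ[ZMod p] 𝔽) (g : Qgrp Λ.toAddSubgroup) :
    ((ofLin Λ x : oneCocycles (ARep Λ.toAddSubgroup)) g : Fin 2 → 𝔽)
      = ![x ⟨ent g, ent_mem' Λ g⟩, 0] := rfl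

theorem ofLin_mem_ker (x : Λ →ₗ[ZMod p] 𝔽) (g₀ : Qgrp Λ.toAddSubgroup) :
    ofLin Λ x ∈ LinearMap.ker (Phi (Λ := Λ.toAddSubgroup) g₀) := by
  rw [LinearMap.mem_ker]
  show ((ofLin Λ x : oneCocycles (ARep Λ.toAddSubgroup)) g₀ : Fin 2 → 𝔽) 1 = 0
  rw [ofLin_apply]
  simp

noncomputable def kerPhiEquiv {g₀ : Qgrp Λ.toAddSubgroup} (hg₀ : ent g₀ ≠ 0) :
    LinearMap.ker (Phi (Λ := Λ.toAddSubgroup) g₀) ≃ₗ[𝔽] (Λ →ₗ[ZMod p] 𝔽) where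
  toFun := kerX Λ hg₀
  map_add' f g := by ext l; rfl
  map_smul' c f := by ext l; rfl
  invFun x := ⟨ofLin Λ x, ofLin_mem_ker Λ x g₀⟩
  left_inv f := by
    apply Subtype.ext
    apply Subtype.ext
    funext g
    show ((ofLin Λ (kerX Λ hg₀ f) : oneCocycles (ARep Λ.toAddSubgroup)) g : Fin 2 → 𝔽)
      = ((f : oneCocycles (ARep Λ.toAddSubgroup)) g : Fin 2 → 𝔽)
    rw [ofLin_apply, kerX_apply, uQ'_ent]
    funext i
    fin_cases i
    · rfl
    · exact (snd_eq_zero_of_ker hg₀ f.1 f.2 g).symm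
  right_inv x := by
    ext l
    show ((ofLin Λ x : oneCocycles (ARep Λ.toAddSubgroup)) (uQ' Λ l) : Fin 2 → 𝔽) 0 = x l
    rw [ofLin_apply]
    show x ⟨ent (uQ' Λ l), _⟩ = x l
    exact congrArg x (Subtype.ext (ent_uQ' Λ l))

set_option synthInstance.maxHeartbeats 1000000 in
set_option maxHeartbeats 1000000 in
theorem finrank_kerPhi [Fact p.Prime] [Fintype 𝔽] {g₀ : Qgrp Λ.toAddSubgroup}
    (hg₀ : ent g₀ ≠ 0) :
    Module.finrank 𝔽 (LinearMap.ker (Phi (Λ := Λ.toAddSubgroup) g₀))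
      = Module.finrank (ZMod p) Λ := by
  rw [(kerPhiEquiv Λ hg₀).finrank_eq]
  let b := Module.finBasis (ZMod p) Λ
  rw [← (b.constr 𝔽 : _ ≃ₗ[𝔽] (Λ →ₗ[ZMod p] 𝔽)).finrank_eq]
  simp [Module.finrank_fin_fun]

end Aux3

section Aux4
variable {𝔽 : Type u} [Field 𝔽] {Λ : AddSubgroup 𝔽}

theorem finiteQ [Fintype 𝔽] : Finite (Qgrp Λ) := inferInstance

theorem fdAmbient [Fintype 𝔽] :
    FiniteDimensional 𝔽 (Qgrp Λ → (Fin 2 → 𝔽)) := by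
  have := Fintype.ofFinite ↥(Qgrp Λ)
  infer_instance

theorem fdCocycles [Fintype 𝔽] :
    FiniteDimensional 𝔽 (oneCocycles (ARep Λ)) := by
  have h : FiniteDimensional 𝔽 (↥(Qgrp Λ) → ((ARep Λ) : Type u)) := fdAmbient
  exact FiniteDimensional.finiteDimensional_submodule (oneCocycles (ARep Λ))

theorem dZero_apply' (v : CoeSort.coe (ARep Λ)) (g : Qgrp Λ) :
    dZero (ARep Λ) v g = ![ent g * v 1, 0] := by
  have h : dZero (ARep Λ) v g = (ARep Λ).ρ g v - v := rfl
  rw [h, rho_apply g v]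
  funext i
  fin_cases i
  · show v 0 + ent g * v 1 - v 0 = ent g * v 1
    ring
  · show v 1 - v 1 = (0 : 𝔽)
    ring

noncomputable def kerDZeroEquiv {g₀ : Qgrp Λ} (hg₀ : ent g₀ ≠ 0) :
    LinearMap.ker (dZero (ARep Λ)) ≃ₗ[𝔽] 𝔽 where
  toFun v := (v.1 : Fin 2 → 𝔽) 0
  map_add' v w := rfl
  map_smul' c v := rfl
  invFun t := ⟨(![t, 0] : Fin 2 → 𝔽), by
    rw [LinearMap.mem_ker]
    funext g
    rw [show dZero (ARep Λ) (![t, 0] : Fin 2 → 𝔽) g = ![ent g * ![t, (0:𝔽)] 1, 0] from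
      dZero_apply' _ g]
    funext i
    fin_cases i <;> simp <;> exact rfl⟩
  left_inv v := by
    apply Subtype.ext
    have hv := v.2
    rw [LinearMap.mem_ker] at hv
    have h0 : dZero (ARep Λ) v.1 g₀ = 0 := by rw [hv]; rfl
    rw [dZero_apply'] at h0
    have h1 : ent g₀ * (v.1 : Fin 2 → 𝔽) 1 = 0 := congrFun h0 0
    have h2 : (v.1 : Fin 2 → 𝔽) 1 = 0 := (mul_eq_zero.1 h1).resolve_left hg₀
    show (![(v.1 : Fin 2 → 𝔽) 0, 0] : Fin 2 → 𝔽) = _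
    funext i
    fin_cases i
    · rfl
    · exact h2.symm
  right_inv t := rfl

set_option synthInstance.maxHeartbeats 1000000 in
set_option maxHeartbeats 1000000 in
theorem finrank_coboundaries [Fintype 𝔽] {g₀ : Qgrp Λ} (hg₀ : ent g₀ ≠ 0) :
    Module.finrank 𝔽 (oneCoboundaries (ARep Λ)) = 1 := by
  have hfd : FiniteDimensional 𝔽 ((ARep Λ) : Type u) :=
    inferInstanceAs (FiniteDimensional 𝔽 (Fin 2 → 𝔽))
  have hrk : Module.finrank 𝔽 ((ARep Λ) : Type u) = 2 := by
    have : Module.finrank 𝔽 (Fin 2 → 𝔽) = 2 := by simp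
    exact this
  rw [oneCoboundaries]
  have h := LinearMap.finrank_range_add_finrank_ker
    ((dZero (ARep Λ)).codRestrict (oneCocycles (ARep Λ)) fun c =>
      d₀₁_apply_mem_cocycles₁ c)
  rw [LinearMap.ker_codRestrict] at h
  have hker : Module.finrank 𝔽 (LinearMap.ker (dZero (ARep Λ))) = 1 := by
    rw [(kerDZeroEquiv hg₀).finrank_eq, Module.finrank_self]
  rw [hker, hrk] at h
  omega

/-- the square cocycle used when `p ≠ 2`. -/
noncomputable def sqCocycle (h2 : (2 : 𝔽) ≠ 0) : oneCocycles (ARep Λ) :=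
  ⟨fun g => ![ent g ^ 2 / 2, ent g], by
    rw [mem_cocycles₁_iff]
    intro g h
    rw [rho_apply]
    funext i
    fin_cases i
    · show ent (g * h) ^ 2 / 2 = (![ent h ^ 2 / 2, ent h] 0
        + ent g * ![ent h ^ 2 / 2, ent h] 1) + ![ent g ^ 2 / 2, ent g] 0
      rw [ent_mul]
      simp only [Matrix.cons_val_zero, Matrix.cons_val_one, Matrix.head_cons]
      field_simp
      ring
    · show ent (g * h) = ![ent h ^ 2 / 2, ent h] 1 + ![ent g ^ 2 / 2, ent g] 1
      rw [ent_mul]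
      simp [add_comm]⟩

theorem phi_surjective (h2 : (2 : 𝔽) ≠ 0) {g₀ : Qgrp Λ} (hg₀ : ent g₀ ≠ 0) :
    Function.Surjective (Phi (Λ := Λ) g₀) := by
  intro t
  refine ⟨(t / ent g₀) • sqCocycle h2, ?_⟩
  have h1 : Phi g₀ ((t / ent g₀) • sqCocycle h2) = (t / ent g₀) * Phi g₀ (sqCocycle h2) :=
    map_smul _ _ _
  have h2' : Phi (Λ := Λ) g₀ (sqCocycle h2) = ent g₀ := rfl
  rw [h1, h2']
  field_simp

theorem phi_eq_zero_of_char_two (h2 : (2 : 𝔽) = 0) {g₀ : Qgrp Λ} (hg₀ : ent g₀ ≠ 0)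
    (f : oneCocycles (ARep Λ)) : Phi g₀ f = 0 := by
  have hg : g₀ * g₀ = 1 := by
    apply Subtype.ext
    show g₀.1 * g₀.1 = 1
    rw [coe_eq_unipMat g₀, unipMat_mul]
    have : ent g₀ + ent g₀ = 0 := by
      rw [← two_mul, h2, zero_mul]
    rw [this, unipMat_zero]
  have h0 := cocycle_rel₀ f g₀ g₀
  rw [hg] at h0
  have h1 : (f (1 : Qgrp Λ) : Fin 2 → 𝔽) 0 = 0 := by
    rw [cocycles₁_map_one f]
    rfl
  rw [h1] at h0
  have h3 : ent g₀ * (f g₀ : Fin 2 → 𝔽) 1 = 0 := by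
    have hx : (f g₀ : Fin 2 → 𝔽) 0 + (f g₀ : Fin 2 → 𝔽) 0 = 0 := by
      rw [← two_mul, h2, zero_mul]
    linear_combination -h0 - hx
  rw [Phi_apply]
  exact (mul_eq_zero.1 h3).resolve_left hg₀

theorem cocycles_eq_bot (hΛ : ∀ l ∈ Λ, l = (0:𝔽)) :
    oneCocycles (ARep Λ) = ⊥ := by
  rw [eq_bot_iff]
  intro f hf
  rw [Submodule.mem_bot]
  funext g
  have hg : g = 1 := by
    apply Subtype.ext
    rw [coe_eq_unipMat g, hΛ (ent g) (ent_mem g), unipMat_zero]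
    rfl
  rw [hg]
  exact cocycles₁_map_one (⟨f, hf⟩ : oneCocycles (ARep Λ))

end Aux4


set_option maxHeartbeats 2000000 in
set_option synthInstance.maxHeartbeats 1000000 in
/-- Let `𝔽` be a finite field of characteristic `p`, `Λ ⊆ 𝔽` an
`𝔽_p`-subspace of dimension `k`, and `Q = {(1, λ; 0, 1) : λ ∈ Λ} ≤ SL₂(𝔽)` acting on
`V = 𝔽²`. Then `dim_𝔽 H¹(Q, V) = k` if `p > 2`, and `= k - 1` if `p = 2` (and `k ≥ 1`). -/
theorem finrank_h1_unipotent (p : ℕ) [Fact p.Prime] (𝔽 : Type u) [Field 𝔽] [Fintype 𝔽]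
    [CharP 𝔽 p] :
    letI := ZMod.algebra 𝔽 p
    ∀ (Λ : Submodule (ZMod p) 𝔽) (k : ℕ), k = Module.finrank (ZMod p) Λ →
      (2 < p → Module.finrank 𝔽 (groupCohomology.H1
        (Rep.of (MonoidHom.comp (slRep 𝔽 2) (unipSubgroup Λ.toAddSubgroup).subtype))) = k) ∧
      (p = 2 → 1 ≤ k → Module.finrank 𝔽 (groupCohomology.H1
        (Rep.of (MonoidHom.comp (slRep 𝔽 2) (unipSubgroup Λ.toAddSubgroup).subtype))) = k - 1) := by
  letI := ZMod.algebra 𝔽 p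
  intro Λ k hk
  haveI hfd : FiniteDimensional 𝔽 (oneCocycles (ARep Λ.toAddSubgroup)) := fdCocycles
  have hquot := Submodule.finrank_quotient_add_finrank (oneCoboundaries (ARep Λ.toAddSubgroup))
  haveI : FiniteDimensional (ZMod p) Λ := inferInstance
  constructor
  · -- p > 2
    intro hp
    have h2 : (2 : 𝔽) ≠ 0 := by
      have := (CharP.cast_eq_zero_iff 𝔽 p 2).not
      intro hc
      have h4 : ((2 : ℕ) : 𝔽) = 0 := by exact_mod_cast hc
      have := (CharP.cast_eq_zero_iff 𝔽 p 2).1 h4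
      have := Nat.le_of_dvd (by norm_num) this
      omega
    rcases Nat.eq_zero_or_pos k with hk0 | hk1
    · -- k = 0 : Λ = ⊥
      subst hk0
      have hbot : Λ = ⊥ := Submodule.finrank_eq_zero.1 hk.symm
      have hΛ : ∀ l ∈ Λ.toAddSubgroup, l = (0 : 𝔽) := by
        intro l hl
        have := (Submodule.mem_toAddSubgroup _).1 hl
        rw [hbot, Submodule.mem_bot] at this
        exact this
      have hz : oneCocycles (ARep Λ.toAddSubgroup) = ⊥ := cocycles_eq_bot hΛ
      have : Module.finrank 𝔽 (oneCocycles (ARep Λ.toAddSubgroup)) = 0 := by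
        rw [hz]; exact finrank_bot 𝔽 _
      rw [this] at hquot
      rw [(H1Iso _).toLinearEquiv.finrank_eq]
      show Module.finrank 𝔽
        (oneCocycles (ARep Λ.toAddSubgroup) ⧸ oneCoboundaries (ARep Λ.toAddSubgroup)) = _
      omega
    · -- k ≥ 1
      obtain ⟨l, hl, hl0⟩ : ∃ l ∈ Λ, l ≠ (0:𝔽) := by
        refine Submodule.exists_mem_ne_zero_of_ne_bot fun hbot => ?_
        rw [hbot, finrank_bot] at hk
        omega
      set g₀ : Qgrp Λ.toAddSubgroup := uQ l ((Submodule.mem_toAddSubgroup _).2 hl) with hg₀def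
      have hg₀ : ent g₀ ≠ 0 := by rw [hg₀def, ent_uQ]; exact hl0
      have hrn := LinearMap.finrank_range_add_finrank_ker (Phi (Λ := Λ.toAddSubgroup) g₀)
      have hsurj : LinearMap.range (Phi (Λ := Λ.toAddSubgroup) g₀) = ⊤ :=
        LinearMap.range_eq_top.2 (phi_surjective h2 hg₀)
      rw [hsurj, finrank_top, Module.finrank_self, finrank_kerPhi Λ hg₀] at hrn
      rw [finrank_coboundaries hg₀] at hquot
      rw [(H1Iso _).toLinearEquiv.finrank_eq]
      show Module.finrank 𝔽
        (oneCocycles (ARep Λ.toAddSubgroup) ⧸ oneCoboundaries (ARep Λ.toAddSubgroup)) = _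
      omega
  · -- p = 2
    intro hp hk1
    subst hp
    have h2 : (2 : 𝔽) = 0 := by
      have := CharP.cast_eq_zero 𝔽 2
      exact_mod_cast this
    obtain ⟨l, hl, hl0⟩ : ∃ l ∈ Λ, l ≠ (0:𝔽) := by
      refine Submodule.exists_mem_ne_zero_of_ne_bot fun hbot => ?_
      rw [hbot, finrank_bot] at hk
      omega
    set g₀ : Qgrp Λ.toAddSubgroup := uQ l ((Submodule.mem_toAddSubgroup _).2 hl) with hg₀def
    have hg₀ : ent g₀ ≠ 0 := by rw [hg₀def, ent_uQ]; exact hl0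
    have hker : LinearMap.ker (Phi (Λ := Λ.toAddSubgroup) g₀) = ⊤ := by
      rw [LinearMap.ker_eq_top]
      exact LinearMap.ext fun f => phi_eq_zero_of_char_two h2 hg₀ f
    have hZ : Module.finrank 𝔽 (oneCocycles (ARep Λ.toAddSubgroup)) = k := by
      have := finrank_kerPhi Λ hg₀
      rw [hker, finrank_top] at this
      rw [this, hk]
    rw [hZ, finrank_coboundaries hg₀] at hquot
    rw [(H1Iso _).toLinearEquiv.finrank_eq]
    show Module.finrank 𝔽
      (oneCocycles (ARep Λ.toAddSubgroup) ⧸ oneCoboundaries (ARep Λ.toAddSubgroup)) = _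
    omega
end

section
/- Let 𝔽 be a finite field of characteristic p and let H be a subgroup of SL₂(𝔽) whose p-Sylow subgroup Q is normal in H, is contained in the group of upper-triangular unipotent matrices { (1, λ; 0, 1) : λ ∈ 𝔽 }, and is such that H/Q is cyclic of order prime to p. Let V = 𝔽² with H acting by matrix-vector multiplication. Then for all σ, τ ∈ Q with σ ≠ 1 and τ ≠ 1, the kernels of the restriction maps coincide: ker(H¹(H, V) → H¹(⟨σ⟩, V)) = ker(H¹(H, V) → H¹(⟨τ⟩, V)). -/
open groupCohomology

universe u

section Restriction

variable {k G V : Type u} [CommRing k] [Group G] [AddCommGroup V] [Module k V]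

/-- Restriction of 1-cocycles to a subgroup. -/
noncomputable def resOneCocycles (ρ : Representation k G V) (S : Subgroup G) :
    cocycles₁ (Rep.of ρ) →ₗ[k] cocycles₁ (Rep.of (MonoidHom.comp ρ S.subtype)) :=
  LinearMap.codRestrict _
    ((LinearMap.funLeft k _ (fun s : S => (s : G))).comp
      (cocycles₁ (Rep.of ρ)).subtype)
    (fun f => (mem_cocycles₁_iff (A := Rep.of (MonoidHom.comp ρ S.subtype)) _).2
      fun g h => (mem_cocycles₁_iff (A := Rep.of ρ) f.1).1 f.2 g h)

/-- The restriction map `H¹(G, V) → H¹(S, V)` on first group cohomology,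
for a subgroup `S ≤ G`. -/
noncomputable def H1Res (ρ : Representation k G V) (S : Subgroup G) :
    (cocycles₁ (Rep.of ρ) ⧸
        (coboundaries₁ (Rep.of ρ)).comap (cocycles₁ (Rep.of ρ)).subtype) →ₗ[k]
      (cocycles₁ (Rep.of (MonoidHom.comp ρ S.subtype)) ⧸
        (coboundaries₁ (Rep.of (MonoidHom.comp ρ S.subtype))).comap
          (cocycles₁ (Rep.of (MonoidHom.comp ρ S.subtype))).subtype) :=
  Submodule.mapQ _ _ (resOneCocycles ρ S) (by
    intro f hf
    rcases hf with ⟨x, hx⟩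
    exact ⟨x, funext fun g => congrFun hx g⟩)

end Restriction

set_option maxHeartbeats 1000000

section Aux

variable {𝔽 : Type u} [Field 𝔽] {G : Type u} [Group G]

private lemma res_cob (ρ : Representation 𝔽 G (Fin 2 → 𝔽)) (σ τ : G) (lσ lτ : 𝔽)
    (hσv : ∀ v : Fin 2 → 𝔽, ρ σ v = ![v 0 + lσ * v 1, v 1])
    (hτv : ∀ v : Fin 2 → 𝔽, ρ τ v = ![v 0 + lτ * v 1, v 1])
    (hlσ : lσ ≠ 0) (hlτ : lτ ≠ 0) (hcomm : σ * τ = τ * σ)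
    (f : cocycles₁ (Rep.of ρ))
    (hf : resOneCocycles ρ (Subgroup.zpowers σ) f ∈
      (coboundaries₁ (Rep.of (MonoidHom.comp ρ (Subgroup.zpowers σ).subtype))).comap
        (cocycles₁ (Rep.of (MonoidHom.comp ρ (Subgroup.zpowers σ).subtype))).subtype) :
    resOneCocycles ρ (Subgroup.zpowers τ) f ∈
      (coboundaries₁ (Rep.of (MonoidHom.comp ρ (Subgroup.zpowers τ).subtype))).comap
        (cocycles₁ (Rep.of (MonoidHom.comp ρ (Subgroup.zpowers τ).subtype))).subtype := by
  set F : G → (Fin 2 → 𝔽) := fun g => f.1 g with hF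
  have hcoc : ∀ g h : G, F (g * h) = ρ g (F h) + F g :=
    fun g h => (mem_cocycles₁_iff (A := Rep.of ρ) f.1).1 f.2 g h
  -- the key symmetry relation
  have key : lσ * F τ 1 = lτ * F σ 1 := by
    have h1 := hcoc σ τ
    rw [hcomm, hcoc τ σ] at h1
    have h0 := congrFun h1 0
    simp only [Pi.add_apply, hσv, hτv, Matrix.cons_val_zero, Matrix.cons_val_one,
        Matrix.head_cons] at h0
    linear_combination -h0
  obtain ⟨x, hx⟩ := hf
  have hfσ1 : F σ 1 = 0 := by
    let x₀ : Fin 2 → 𝔽 := x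
    have h : ρ σ x₀ - x₀ = F σ := congrFun hx ⟨σ, Subgroup.mem_zpowers σ⟩
    have h1 := congrFun h 1
    rw [Pi.sub_apply, hσv] at h1
    simpa using h1.symm
  have hfτ1 : F τ 1 = 0 := by
    rw [hfσ1, mul_zero] at key
    exact (mul_eq_zero.1 key).resolve_left hlσ
  set x' : Fin 2 → 𝔽 := ![0, lτ⁻¹ * F τ 0] with hx'
  have hτx : ρ τ x' - x' = F τ := by
    funext i
    rw [Pi.sub_apply, hτv]
    fin_cases i
    · show x' 0 + lτ * x' 1 - x' 0 = F τ 0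
      rw [hx']
      simp
      field_simp
    · show x' 1 - x' 1 = F τ 1
      rw [hfτ1, sub_self]
  let K : Subgroup G :=
    { carrier := {g : G | ρ g x' - x' = F g}
      one_mem' := by
        show ρ 1 x' - x' = F 1
        rw [map_one, Module.End.one_apply, sub_self]
        exact (cocycles₁_map_one f).symm
      mul_mem' := by
        intro a b ha hb
        have ha' : ρ a x' - x' = F a := ha
        have hb' : ρ b x' - x' = F b := hb
        show ρ (a * b) x' - x' = F (a * b)
        rw [hcoc a b, ← ha', ← hb', map_mul, Module.End.mul_apply, map_sub]
        abel
      inv_mem' := by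
        intro a ha
        have ha' : ρ a x' - x' = F a := ha
        show ρ a⁻¹ x' - x' = F a⁻¹
        have h1 : ρ a (F a⁻¹) = - F a := cocycles₁_map_inv f a
        have h2 : F a⁻¹ = ρ a⁻¹ (- F a) := by
          rw [← h1, ← Module.End.mul_apply, ← map_mul, inv_mul_cancel, map_one,
            Module.End.one_apply]
        rw [h2, ← ha', map_neg, map_sub, ← Module.End.mul_apply, ← map_mul, inv_mul_cancel,
          map_one, Module.End.one_apply]
        abel }
  have hτK : τ ∈ K := hτx
  have hle : Subgroup.zpowers τ ≤ K := Subgroup.zpowers_le.2 hτK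
  exact ⟨x', funext fun g => hle g.2⟩

end Aux

/-- Let `𝔽` be a finite field of characteristic `p` and `H ≤ SL₂(𝔽)` a
subgroup whose `p`-Sylow subgroup `Q` is normal, consists of upper-triangular unipotent
matrices, and has cyclic quotient `H/Q` of order prime to `p`; let `V = 𝔽²`. Then for all
`σ, τ ∈ Q` with `σ ≠ 1 ≠ τ`, the kernels of the restriction maps `H¹(H, V) → H¹(⟨σ⟩, V)`
and `H¹(H, V) → H¹(⟨τ⟩, V)` coincide. -/
theorem ker_res_eq_ker_res (p : ℕ) [Fact p.Prime] (𝔽 : Type u) [Field 𝔽] [Fintype 𝔽]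
    [CharP 𝔽 p] (H : Subgroup (Matrix.SpecialLinearGroup (Fin 2) 𝔽))
    (Q : Subgroup H) (hQnormal : Q.Normal)
    (hQsylow : ∃ P : Sylow p H, (P : Subgroup H) = Q)
    (hQunip : ∀ x : H, x ∈ Q → ∃ l : 𝔽,
      ((x : Matrix.SpecialLinearGroup (Fin 2) 𝔽) : Matrix (Fin 2) (Fin 2) 𝔽) = !![1, l; 0, 1])
    (hcyc : IsCyclic (H ⧸ Q)) (hcop : ¬ p ∣ Nat.card (H ⧸ Q))
    (σ τ : H) (hσQ : σ ∈ Q) (hτQ : τ ∈ Q) (hσ : σ ≠ 1) (hτ : τ ≠ 1) :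
    LinearMap.ker (H1Res (MonoidHom.comp (slRep 𝔽 2) H.subtype) (Subgroup.zpowers σ)) =
      LinearMap.ker (H1Res (MonoidHom.comp (slRep 𝔽 2) H.subtype) (Subgroup.zpowers τ)) := by
  obtain ⟨lσ, hσm⟩ := hQunip σ hσQ
  obtain ⟨lτ, hτm⟩ := hQunip τ hτQ
  have hρapp : ∀ (g : H) (v : Fin 2 → 𝔽),
      (MonoidHom.comp (slRep 𝔽 2) H.subtype) g v
        = Matrix.mulVec ((g : Matrix.SpecialLinearGroup (Fin 2) 𝔽) :
            Matrix (Fin 2) (Fin 2) 𝔽) v := by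
    intro g v
    show slRep 𝔽 2 (g : Matrix.SpecialLinearGroup (Fin 2) 𝔽) v = _
    simp only [slRep, glRep, MonoidHom.comp_apply, MulEquiv.toMonoidHom_eq_coe,
      MonoidHom.coe_coe, Units.coeHom_apply]
    rw [Matrix.GeneralLinearGroup.coe_toLin, Matrix.mulVecLin_apply]
    rfl
  have unip_mulVec : ∀ (l : 𝔽) (v : Fin 2 → 𝔽),
      Matrix.mulVec !![1, l; 0, 1] v = ![v 0 + l * v 1, v 1] := by
    intro l v
    funext i
    fin_cases i <;> simp [Matrix.mulVec, dotProduct, Fin.sum_univ_two, Matrix.vecHead, Matrix.vecTail]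
  have hσv : ∀ v : Fin 2 → 𝔽, (MonoidHom.comp (slRep 𝔽 2) H.subtype) σ v
      = ![v 0 + lσ * v 1, v 1] := fun v => by rw [hρapp, hσm, unip_mulVec]
  have hτv : ∀ v : Fin 2 → 𝔽, (MonoidHom.comp (slRep 𝔽 2) H.subtype) τ v
      = ![v 0 + lτ * v 1, v 1] := fun v => by rw [hρapp, hτm, unip_mulVec]
  have hcomm : σ * τ = τ * σ := by
    apply Subtype.ext
    apply Subtype.ext
    show ((σ : Matrix.SpecialLinearGroup (Fin 2) 𝔽) : Matrix (Fin 2) (Fin 2) 𝔽)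
        * ((τ : Matrix.SpecialLinearGroup (Fin 2) 𝔽) : Matrix (Fin 2) (Fin 2) 𝔽)
      = ((τ : Matrix.SpecialLinearGroup (Fin 2) 𝔽) : Matrix (Fin 2) (Fin 2) 𝔽)
        * ((σ : Matrix.SpecialLinearGroup (Fin 2) 𝔽) : Matrix (Fin 2) (Fin 2) 𝔽)
    rw [hσm, hτm]
    ext i j
    fin_cases i <;> fin_cases j <;>
      simp [Matrix.mul_apply, Fin.sum_univ_two] <;> ring
  have hne : ∀ (x : H) (l : 𝔽),
      ((x : Matrix.SpecialLinearGroup (Fin 2) 𝔽) : Matrix (Fin 2) (Fin 2) 𝔽) = !![1, l; 0, 1] →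
      x ≠ 1 → l ≠ 0 := by
    intro x l hm hx hl
    subst hl
    refine hx (Subtype.ext (Subtype.ext ?_))
    show ((x : Matrix.SpecialLinearGroup (Fin 2) 𝔽) : Matrix (Fin 2) (Fin 2) 𝔽)
      = (1 : Matrix (Fin 2) (Fin 2) 𝔽)
    rw [hm, Matrix.one_fin_two]
  have hlσ := hne σ lσ hσm hσ
  have hlτ := hne τ lτ hτm hτ
  ext y
  obtain ⟨f, rfl⟩ := Submodule.Quotient.mk_surjective _ y
  simp only [LinearMap.mem_ker, H1Res, Submodule.mapQ_apply, Submodule.Quotient.mk_eq_zero]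
  exact ⟨fun h => res_cob _ σ τ lσ lτ hσv hτv hlσ hlτ hcomm f h,
    fun h => res_cob _ τ σ lτ lσ hτv hσv hlτ hlσ hcomm.symm f h⟩
end

section
/- Let p be a prime, k ≥ 1, q = p^k, and let M be a field containing the finite field 𝔽_q. Let f ∈ M and let β₁, …, β_k ∈ 𝔽_q be linearly independent over 𝔽_p. Then, inside a fixed algebraic closure of M, the splitting field of the polynomial X^q − X − f over M equals the compositum of the splitting fields over M of the polynomials X^p − X − β_i·f for i = 1, …, k. -/
open Polynomial

/-- Any element of a field `L` satisfying `x ^ |F| = x` lies in the image of an embedding of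
the finite field `F`. -/
lemma exists_eq_of_pow_card_eq' {F L : Type*} [Field F] [Fintype F] [Field L]
    (φ : F →+* L) {x : L} (hx : x ^ Fintype.card F = x) : ∃ c : F, φ c = x := by
  classical
  set n := Fintype.card F with hn
  have h1n : 1 < n := Fintype.one_lt_card
  set P : L[X] := X ^ n - X with hP
  have hP0 : P ≠ 0 := by
    intro h
    have h1 : P.coeff n = 1 := by
      rw [hP]
      simp [coeff_X, h1n.ne]
    rw [h] at h1; simp at h1
  have hdeg : P.natDegree ≤ n := by
    refine (natDegree_sub_le _ _).trans ?_
    simp only [natDegree_X_pow, natDegree_X]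
    omega
  have hroot : ∀ y : L, y ^ n = y → y ∈ P.roots.toFinset := by
    intro y hy
    rw [Multiset.mem_toFinset, mem_roots hP0]
    simp [hP, IsRoot, hy]
  have hsub : Finset.univ.image φ ⊆ P.roots.toFinset := by
    intro y hy
    obtain ⟨c, -, rfl⟩ := Finset.mem_image.mp hy
    exact hroot _ (by rw [← map_pow, hn, FiniteField.pow_card])
  have hcard : P.roots.toFinset.card ≤ (Finset.univ.image φ).card := by
    rw [Finset.card_image_of_injective _ φ.injective, Finset.card_univ]
    exact ((Multiset.toFinset_card_le _).trans P.card_roots').trans hdeg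
  have heq := Finset.eq_of_subset_of_card_le hsub hcard
  have hx' : x ∈ Finset.univ.image φ := by rw [heq]; exact hroot x hx
  obtain ⟨c, -, hc⟩ := Finset.mem_image.mp hx'
  exact ⟨c, hc⟩

/-- Invertibility of the Moore matrix, in the form of existence of coefficients expressing
the first standard basis vector. -/
lemma moore_coeffs' {p k : ℕ} [Fact p.Prime] (hk : 0 < k) {𝔽 : Type*} [Field 𝔽] [Fintype 𝔽]
    (hcard : Fintype.card 𝔽 = p ^ k) [CharP 𝔽 p] [Algebra (ZMod p) 𝔽]
    (β : Fin k → 𝔽) (hβ : LinearIndependent (ZMod p) β) :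
    ∃ c : Fin k → 𝔽, ∀ j : Fin k,
      ∑ i, c i * β i ^ p ^ (j : ℕ) = if (j : ℕ) = 0 then 1 else 0 := by
  classical
  haveI : NeZero k := ⟨hk.ne'⟩
  have hp1 : 1 < p := (Fact.out : p.Prime).one_lt
  set A : Matrix (Fin k) (Fin k) 𝔽 := Matrix.of fun j i => β i ^ p ^ (j : ℕ) with hA
  have hfix : ∀ (r : ZMod p) (m : ℕ), r ^ p ^ m = r := by
    intro r m
    induction m with
    | zero => simp
    | succ m ih => rw [pow_succ, pow_mul, ih, ZMod.pow_card]
  have hdet : A.det ≠ 0 := by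
    intro h
    obtain ⟨v, hv0, hv⟩ := Matrix.exists_vecMul_eq_zero_iff.mpr h
    let g : 𝔽 →ₗ[ZMod p] 𝔽 :=
      { toFun := fun x => ∑ j : Fin k, v j * x ^ p ^ (j : ℕ)
        map_add' := by
          intro x y
          simp only [add_pow_char_pow, mul_add]
          rw [Finset.sum_add_distrib]
        map_smul' := by
          intro r x
          simp only [RingHom.id_apply, Finset.smul_sum]
          refine Finset.sum_congr rfl fun j _ => ?_
          rw [Algebra.smul_def, mul_pow, ← map_pow, hfix, Algebra.smul_def]
          ring }
    have hfr : Module.finrank (ZMod p) 𝔽 = k := by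
      have h2 := Module.card_eq_pow_finrank (K := ZMod p) (V := 𝔽)
      rw [ZMod.card, hcard] at h2
      exact (Nat.pow_right_injective (by omega : 2 ≤ p) h2.symm)
    have hcard' : Fintype.card (Fin k) = Module.finrank (ZMod p) 𝔽 := by
      simp [hfr]
    haveI : Nonempty (Fin k) := ⟨⟨0, hk⟩⟩
    let b := basisOfLinearIndependentOfCardEqFinrank hβ hcard'
    have hgb : g = 0 := by
      refine b.ext fun i => ?_
      have hb : b i = β i :=
        congrFun (coe_basisOfLinearIndependentOfCardEqFinrank hβ hcard') i
      have hvi := congrFun hv i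
      simpa [g, hb, Matrix.vecMul, dotProduct, hA] using hvi
    have hg : ∀ x : 𝔽, ∑ j : Fin k, v j * x ^ p ^ (j : ℕ) = 0 := by
      intro x
      have := congrFun (congrArg (fun (f : 𝔽 →ₗ[ZMod p] 𝔽) => (f : 𝔽 → 𝔽)) hgb) x
      simpa [g] using this
    set Q : Polynomial 𝔽 := ∑ j : Fin k, C (v j) * X ^ (p ^ (j : ℕ)) with hQ
    have hQeval : ∀ x : 𝔽, Q.eval x = 0 := by
      intro x
      rw [hQ]
      simpa [eval_finset_sum] using hg x
    have hQdeg : Q.natDegree < Fintype.card 𝔽 := by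
      rw [hcard]
      refine lt_of_le_of_lt (natDegree_sum_le_of_forall_le _ _ fun j _ => ?_)
        (Nat.pow_lt_pow_right hp1 (by omega : k - 1 < k))
      refine (natDegree_C_mul_le _ _).trans ?_
      rw [natDegree_X_pow]
      exact Nat.pow_le_pow_right (by omega) (by omega : (j : ℕ) ≤ k - 1)
    have hQ0 : Q = 0 :=
      eq_zero_of_natDegree_lt_card_of_eval_eq_zero Q Function.injective_id
        (fun x => hQeval x) hQdeg
    apply hv0
    funext j
    have hco := congrArg (fun (R : Polynomial 𝔽) => R.coeff (p ^ (j : ℕ))) hQ0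
    simp only [hQ, finset_sum_coeff, coeff_C_mul, coeff_X_pow, coeff_zero] at hco
    rw [Finset.sum_eq_single j] at hco
    · simpa using hco
    · intro b _ hbj
      have hne : ¬ (p ^ (j : ℕ) = p ^ (b : ℕ)) := by
        intro h
        exact hbj (Fin.ext (Nat.pow_right_injective (by omega : 2 ≤ p) h.symm))
      simp [hne]
    · simp
  have hA' : IsUnit A.det := isUnit_iff_ne_zero.mpr hdet
  refine ⟨A⁻¹.mulVec (Pi.single 0 1), fun j => ?_⟩
  have hm : A.mulVec (A⁻¹.mulVec (Pi.single 0 1)) = Pi.single 0 1 := by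
    rw [Matrix.mulVec_mulVec, Matrix.mul_nonsing_inv _ hA', Matrix.one_mulVec]
  have hj := congrFun hm j
  generalize A⁻¹.mulVec (Pi.single 0 1) = w at hj ⊢
  simp only [Matrix.mulVec, dotProduct, hA, Matrix.of_apply, Pi.single_apply, Fin.ext_iff,
    Fin.val_zero] at hj
  rw [← hj]
  exact Finset.sum_congr rfl fun i _ => mul_comm _ _

lemma artinSchreier_poly_facts {M : Type*} [Field M] (n : ℕ) (hn : 1 < n) (g : M) :
    (X ^ n - X - C g).natDegree = n ∧ (X ^ n - X - C g) ≠ 0 ∧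
      (X ^ n - X - C g).degree ≠ 0 := by
  have hdeg : (X ^ n - X - C g).natDegree = n := by
    have hlt : (X + C g : M[X]).natDegree < (X ^ n : M[X]).natDegree := by
      rw [natDegree_X_pow]
      refine lt_of_le_of_lt (natDegree_add_le _ _) ?_
      simp only [natDegree_X, natDegree_C]
      omega
    rw [sub_sub, natDegree_sub_eq_left_of_natDegree_lt hlt, natDegree_X_pow]
  have h0 : (X ^ n - X - C g) ≠ 0 := by
    intro h
    rw [h, natDegree_zero] at hdeg
    omega
  refine ⟨hdeg, h0, ?_⟩
  rw [degree_eq_natDegree h0, hdeg]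
  exact_mod_cast (by omega : n ≠ 0)

set_option maxHeartbeats 2000000 in
/-- Let `q = p^k` (`k ≥ 1`), `𝔽` the field with `q` elements, `M` a field
containing `𝔽`, `f ∈ M`, and `β₁, …, β_k ∈ 𝔽` linearly independent over `𝔽_p`. Then inside a
fixed algebraic closure of `M`, the splitting field of `X^q - X - f` over `M` is the
compositum of the splitting fields of the polynomials `X^p - X - βᵢ·f`. -/
theorem splittingField_artinSchreier_eq_iSup (p k : ℕ) [Fact p.Prime] (hk : 0 < k)
    (q : ℕ) (hq : q = p ^ k) (𝔽 : Type*) [Field 𝔽] [Fintype 𝔽]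
    (hcard : Fintype.card 𝔽 = q) [CharP 𝔽 p]
    (M : Type*) [Field M] [Algebra 𝔽 M] (f : M) :
    letI := ZMod.algebra 𝔽 p
    ∀ β : Fin k → 𝔽, LinearIndependent (ZMod p) β →
      IntermediateField.adjoin M ((X ^ q - X - C f).rootSet (AlgebraicClosure M)) =
        ⨆ i : Fin k, IntermediateField.adjoin M
          ((X ^ p - X - C (algebraMap 𝔽 M (β i) * f)).rootSet (AlgebraicClosure M)) := by
  letI := ZMod.algebra 𝔽 p
  intro β hβ
  classical
  have hp1 : 1 < p := (Fact.out : p.Prime).one_lt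
  have hq1 : 1 < q := by
    rw [hq]
    exact Nat.one_lt_pow (by omega) hp1
  set L := AlgebraicClosure M with hL
  haveI : CharP M p := charP_of_injective_algebraMap (algebraMap 𝔽 M).injective p
  haveI : CharP L p := charP_of_injective_algebraMap (algebraMap M L).injective p
  set φ : 𝔽 →+* L := (algebraMap M L).comp (algebraMap 𝔽 M) with hφ
  set P : M[X] := X ^ q - X - C f with hP
  obtain ⟨hPdeg, hP0, hPd⟩ := artinSchreier_poly_facts q hq1 f
  obtain ⟨α, hα⟩ := IsAlgClosed.exists_aeval_eq_zero L P hPd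
  have hαq : α ^ q = α + algebraMap M L f := by
    rw [hP] at hα
    simp only [map_sub, map_pow, aeval_X, aeval_C] at hα
    linear_combination hα
  -- the additive expression
  set T : L → L := fun y => ∑ j ∈ Finset.range k, y ^ p ^ j with hT
  have hTkey : ∀ y : L, (T y) ^ p - T y = y ^ q - y := by
    intro y
    rw [hT]
    have h1 : (∑ j ∈ Finset.range k, y ^ p ^ j) ^ p
        = ∑ j ∈ Finset.range k, y ^ p ^ (j + 1) := by
      rw [sum_pow_char]
      exact Finset.sum_congr rfl fun j _ => by rw [← pow_mul, ← pow_succ]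
    have h2 : (∑ j ∈ Finset.range k, y ^ p ^ (j + 1))
        = ∑ j ∈ Finset.range (k + 1), y ^ p ^ j - y := by
      rw [Finset.sum_range_succ' (fun j => y ^ p ^ j) k]
      simp
    rw [h1, h2, Finset.sum_range_succ, hq]
    ring
  have hroot_small : ∀ b : 𝔽,
      aeval (T (φ b * α)) (X ^ p - X - C (algebraMap 𝔽 M b * f)) = 0 := by
    intro b
    have hbq : φ b ^ q = φ b := by
      rw [← map_pow, ← hcard, FiniteField.pow_card]
    simp only [map_sub, map_pow, aeval_X, aeval_C]
    rw [hTkey]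
    have hmul : (φ b * α) ^ q = φ b * α + φ b * algebraMap M L f := by
      rw [mul_pow, hbq, hαq, mul_add]
    rw [hmul, map_mul]
    have : (algebraMap M L) (algebraMap 𝔽 M b) = φ b := rfl
    rw [this]
    ring
  have hsmall_facts : ∀ b : 𝔽, (X ^ p - X - C (algebraMap 𝔽 M b * f)).natDegree = p ∧
      (X ^ p - X - C (algebraMap 𝔽 M b * f)) ≠ 0 ∧
      (X ^ p - X - C (algebraMap 𝔽 M b * f)).degree ≠ 0 :=
    fun b => artinSchreier_poly_facts p hp1 _
  have hαmem : α ∈ P.rootSet L := mem_rootSet.mpr ⟨hP0, hα⟩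
  have hcard' : Fintype.card 𝔽 = p ^ k := by rw [hcard, hq]
  obtain ⟨c, hc⟩ := moore_coeffs' hk hcard' β hβ
  -- expressing α in terms of the roots of the small polynomials
  have hαsum : α = ∑ i : Fin k, φ (c i) * T (φ (β i) * α) := by
    have expand : ∀ i : Fin k, φ (c i) * T (φ (β i) * α)
        = ∑ j ∈ Finset.range k, φ (c i * β i ^ p ^ j) * α ^ p ^ j := by
      intro i
      rw [hT, Finset.mul_sum]
      refine Finset.sum_congr rfl fun j _ => ?_
      rw [mul_pow, ← map_pow, map_mul]
      ring
    rw [Finset.sum_congr rfl fun i _ => expand i, Finset.sum_comm]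
    have hcol : ∀ j ∈ Finset.range k,
        (∑ i : Fin k, φ (c i * β i ^ p ^ j) * α ^ p ^ j)
          = (if j = 0 then α else 0) := by
      intro j hj
      have hjk : j < k := Finset.mem_range.mp hj
      have hcj := hc ⟨j, hjk⟩
      rw [show ((⟨j, hjk⟩ : Fin k) : ℕ) = j from rfl] at hcj
      rw [← Finset.sum_mul, ← map_sum]
      simp only [hcj]
      by_cases h0 : j = 0
      · simp [h0]
      · simp [h0]
    rw [Finset.sum_congr rfl hcol, Finset.sum_ite_eq' (Finset.range k) 0 (fun _ => α)]
    rw [if_pos (Finset.mem_range.mpr hk)]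
  apply le_antisymm
  · rw [IntermediateField.adjoin_le_iff]
    intro x hx
    rw [mem_rootSet] at hx
    have hxq : x ^ q = x + algebraMap M L f := by
      have hx2 := hx.2
      rw [hP] at hx2
      simp only [map_sub, map_pow, aeval_X, aeval_C] at hx2
      linear_combination hx2
    have hsubq : (x - α) ^ Fintype.card 𝔽 = x - α := by
      rw [hcard', ← hq, hq, sub_pow_char_pow, ← hq, hxq, hαq]
      ring
    obtain ⟨d, hd⟩ := exists_eq_of_pow_card_eq' φ hsubq
    have hx_eq : x = α + φ d := by rw [hd]; ring
    rw [hx_eq]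
    refine add_mem ?_ ?_
    · rw [hαsum]
      refine sum_mem fun i _ => mul_mem ?_ ?_
      · exact IntermediateField.algebraMap_mem _ (algebraMap 𝔽 M (c i))
      · have hmem : T (φ (β i) * α)
            ∈ (X ^ p - X - C (algebraMap 𝔽 M (β i) * f)).rootSet L :=
          mem_rootSet.mpr ⟨(hsmall_facts (β i)).2.1, hroot_small (β i)⟩
        have hsub := IntermediateField.subset_adjoin M
          ((X ^ p - X - C (algebraMap 𝔽 M (β i) * f)).rootSet L)
        have h2 := hsub hmem
        refine SetLike.le_def.mp (le_iSup _ i) ?_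
        exact h2
    · exact IntermediateField.algebraMap_mem _ (algebraMap 𝔽 M d)
  · refine iSup_le fun i => ?_
    rw [IntermediateField.adjoin_le_iff]
    intro y hy
    rw [mem_rootSet] at hy
    have hyp : y ^ p = y + algebraMap M L (algebraMap 𝔽 M (β i) * f) := by
      have hy2 := hy.2
      simp only [map_sub, map_pow, aeval_X, aeval_C] at hy2
      linear_combination hy2
    have hγp : (T (φ (β i) * α)) ^ p
        = T (φ (β i) * α) + algebraMap M L (algebraMap 𝔽 M (β i) * f) := by
      have := hroot_small (β i)
      simp only [map_sub, map_pow, aeval_X, aeval_C] at this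
      linear_combination this
    have hsubp : (y - T (φ (β i) * α)) ^ Fintype.card (ZMod p)
        = y - T (φ (β i) * α) := by
      rw [ZMod.card, sub_pow_char, hyp, hγp]
      ring
    obtain ⟨d, hd⟩ := exists_eq_of_pow_card_eq' (φ.comp (algebraMap (ZMod p) 𝔽)) hsubp
    have hy_eq : y = T (φ (β i) * α) + φ (algebraMap (ZMod p) 𝔽 d) := by
      rw [show φ (algebraMap (ZMod p) 𝔽 d) = (φ.comp (algebraMap (ZMod p) 𝔽)) d from rfl, hd]
      ring
    rw [hy_eq]
    refine add_mem ?_ ?_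
    · rw [hT]
      refine sum_mem fun j _ => pow_mem (mul_mem ?_ ?_) _
      · exact IntermediateField.algebraMap_mem _ (algebraMap 𝔽 M (β i))
      · exact IntermediateField.subset_adjoin _ _ hαmem
    · exact IntermediateField.algebraMap_mem _ (algebraMap 𝔽 M (algebraMap (ZMod p) 𝔽 d))
end
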